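/- Completeness of EqFSCL for FSCL_se: for all closed SCL-terms P and Q, if se(P) = se(Q) then EqFSCL ⊢ P = Q. -/

import Mathlib

/-! Shared definitions for left-sequential logics (FEL and SCL),
    evaluation trees, and decompositions. -/

/-- FEL-terms over atoms `A` (`and` = full left-sequential conjunction `∧•`,
    `or` = full left-sequential disjunction `∨•`). -/
inductive FTerm (A : Type) : Type
  | atom : A → FTerm A
  | tru  : FTerm A
  | fls  : FTerm A
  | neg  : FTerm A → FTerm A
  | and  : FTerm A → FTerm A → FTerm A
  | or   : FTerm A → FTerm A → FTerm A

/-- SCL-terms over atoms `A` (`and` = short-circuit conjunction `∧◦`,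
    `or` = short-circuit disjunction `∨◦`). -/
inductive STerm (A : Type) : Type
  | atom : A → STerm A
  | tru  : STerm A
  | fls  : STerm A
  | neg  : STerm A → STerm A
  | and  : STerm A → STerm A → STerm A
  | or   : STerm A → STerm A → STerm A

/-- Evaluation trees: finite binary trees over `A` with leaves `T`, `F`. -/
inductive ETree (A : Type) : Type
  | tru  : ETree A
  | fls  : ETree A
  | node : ETree A → A → ETree A → ETree A

namespace ETree

/-- `X.subst Y Z = X[T↦Y, F↦Z]`. -/
def subst {A : Type} : ETree A → ETree A → ETree A → ETree A
  | .tru, y, _ => y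
  | .fls, _, z => z
  | .node l a r, y, z => .node (subst l y z) a (subst r y z)

def hasTru {A : Type} : ETree A → Prop
  | .tru => True
  | .fls => False
  | .node l _ r => hasTru l ∨ hasTru r

def hasFls {A : Type} : ETree A → Prop
  | .tru => False
  | .fls => True
  | .node l _ r => hasFls l ∨ hasFls r

def depth {A : Type} : ETree A → ℕ
  | .tru => 0
  | .fls => 0
  | .node l _ r => 1 + max (depth l) (depth r)

end ETree

/-- The full evaluation function `fe : FTerm → 𝒯`. -/
def fe {A : Type} : FTerm A → ETree A
  | FTerm.tru => ETree.tru
  | FTerm.fls => ETree.fls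
  | FTerm.atom a => ETree.node ETree.tru a ETree.fls
  | FTerm.neg p => (fe p).subst ETree.fls ETree.tru
  | FTerm.and p q => (fe p).subst (fe q) ((fe q).subst ETree.fls ETree.fls)
  | FTerm.or p q => (fe p).subst ((fe q).subst ETree.tru ETree.tru) (fe q)

/-- The short-circuit evaluation function `se : STerm → 𝒯`. -/
def se {A : Type} : STerm A → ETree A
  | STerm.tru => ETree.tru
  | STerm.fls => ETree.fls
  | STerm.atom a => ETree.node ETree.tru a ETree.fls
  | STerm.neg p => (se p).subst ETree.fls ETree.tru
  | STerm.and p q => (se p).subst (se q) ETree.fls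
  | STerm.or p q => (se p).subst ETree.tru (se q)

/-- Derivability from EqFFEL by equational logic. -/
inductive EqFFEL {A : Type} : FTerm A → FTerm A → Prop
  | refl (p : FTerm A) : EqFFEL p p
  | symm {p q : FTerm A} : EqFFEL p q → EqFFEL q p
  | trans {p q r : FTerm A} : EqFFEL p q → EqFFEL q r → EqFFEL p r
  | neg_congr {p q : FTerm A} : EqFFEL p q → EqFFEL (FTerm.neg p) (FTerm.neg q)
  | and_congr {p p' q q' : FTerm A} :
      EqFFEL p p' → EqFFEL q q' → EqFFEL (FTerm.and p q) (FTerm.and p' q')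
  | or_congr {p p' q q' : FTerm A} :
      EqFFEL p p' → EqFFEL q q' → EqFFEL (FTerm.or p q) (FTerm.or p' q')
  | fel1 : EqFFEL FTerm.fls (FTerm.neg FTerm.tru)
  | fel2 (x y : FTerm A) : EqFFEL (FTerm.or x y) (FTerm.neg (FTerm.and (FTerm.neg x) (FTerm.neg y)))
  | fel3 (x : FTerm A) : EqFFEL (FTerm.neg (FTerm.neg x)) x
  | fel4 (x y z : FTerm A) : EqFFEL (FTerm.and (FTerm.and x y) z) (FTerm.and x (FTerm.and y z))
  | fel5 (x : FTerm A) : EqFFEL (FTerm.and FTerm.tru x) x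
  | fel6 (x : FTerm A) : EqFFEL (FTerm.and x FTerm.tru) x
  | fel7 (x : FTerm A) : EqFFEL (FTerm.and x FTerm.fls) (FTerm.and FTerm.fls x)
  | fel8 (x : FTerm A) : EqFFEL (FTerm.and x FTerm.fls) (FTerm.and (FTerm.neg x) FTerm.fls)
  | fel9 (x y : FTerm A) :
      EqFFEL (FTerm.or (FTerm.and x FTerm.fls) y) (FTerm.and (FTerm.or x FTerm.tru) y)
  | fel10 (x y : FTerm A) :
      EqFFEL (FTerm.or x (FTerm.and y FTerm.fls)) (FTerm.and x (FTerm.or y FTerm.tru))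

/-- Derivability from EqFSCL by equational logic. -/
inductive EqFSCL {A : Type} : STerm A → STerm A → Prop
  | refl (p : STerm A) : EqFSCL p p
  | symm {p q : STerm A} : EqFSCL p q → EqFSCL q p
  | trans {p q r : STerm A} : EqFSCL p q → EqFSCL q r → EqFSCL p r
  | neg_congr {p q : STerm A} : EqFSCL p q → EqFSCL (STerm.neg p) (STerm.neg q)
  | and_congr {p p' q q' : STerm A} :
      EqFSCL p p' → EqFSCL q q' → EqFSCL (STerm.and p q) (STerm.and p' q')
  | or_congr {p p' q q' : STerm A} :
      EqFSCL p p' → EqFSCL q q' → EqFSCL (STerm.or p q) (STerm.or p' q')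
  | scl1 : EqFSCL STerm.fls (STerm.neg STerm.tru)
  | scl2 (x y : STerm A) : EqFSCL (STerm.or x y) (STerm.neg (STerm.and (STerm.neg x) (STerm.neg y)))
  | scl3 (x : STerm A) : EqFSCL (STerm.neg (STerm.neg x)) x
  | scl4 (x y z : STerm A) : EqFSCL (STerm.and (STerm.and x y) z) (STerm.and x (STerm.and y z))
  | scl5 (x : STerm A) : EqFSCL (STerm.and STerm.tru x) x
  | scl6 (x : STerm A) : EqFSCL (STerm.and x STerm.tru) x
  | scl7 (x : STerm A) : EqFSCL (STerm.and STerm.fls x) STerm.fls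
  | scl8 (x : STerm A) : EqFSCL (STerm.and x STerm.fls) (STerm.and (STerm.neg x) STerm.fls)
  | scl9 (x y : STerm A) :
      EqFSCL (STerm.or (STerm.and x STerm.fls) y) (STerm.and (STerm.or x STerm.tru) y)
  | scl10 (x y z : STerm A) :
      EqFSCL (STerm.or (STerm.and x y) (STerm.and z STerm.fls))
             (STerm.and (STerm.or x (STerm.and z STerm.fls)) (STerm.or y (STerm.and z STerm.fls)))

/-! ### FEL Normal Form grammar -/

/-- T-terms: `P^T ::= T | a ∨• P^T`. -/
inductive IsFT_T {A : Type} : FTerm A → Prop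
  | tru : IsFT_T FTerm.tru
  | or (a : A) {p : FTerm A} : IsFT_T p → IsFT_T (FTerm.or (FTerm.atom a) p)

/-- F-terms: `P^F ::= F | a ∧• P^F`. -/
inductive IsFT_F {A : Type} : FTerm A → Prop
  | fls : IsFT_F FTerm.fls
  | and (a : A) {p : FTerm A} : IsFT_F p → IsFT_F (FTerm.and (FTerm.atom a) p)

/-- ℓ-terms: `P^ℓ ::= a ∧• P^T | ¬a ∧• P^T`. -/
inductive IsFT_L {A : Type} : FTerm A → Prop
  | pos (a : A) {p : FTerm A} : IsFT_T p → IsFT_L (FTerm.and (FTerm.atom a) p)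
  | neg (a : A) {p : FTerm A} : IsFT_T p → IsFT_L (FTerm.and (FTerm.neg (FTerm.atom a)) p)

mutual
/-- `P^c ::= P^ℓ | P^* ∧• P^d`. -/
inductive IsFT_C {A : Type} : FTerm A → Prop
  | ell {p : FTerm A} : IsFT_L p → IsFT_C p
  | and {p q : FTerm A} : IsFT_Star p → IsFT_D q → IsFT_C (FTerm.and p q)
/-- `P^d ::= P^ℓ | P^* ∨• P^c`. -/
inductive IsFT_D {A : Type} : FTerm A → Prop
  | ell {p : FTerm A} : IsFT_L p → IsFT_D p
  | or {p q : FTerm A} : IsFT_Star p → IsFT_C q → IsFT_D (FTerm.or p q)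
/-- `P^* ::= P^c | P^d`. -/
inductive IsFT_Star {A : Type} : FTerm A → Prop
  | c {p : FTerm A} : IsFT_C p → IsFT_Star p
  | d {p : FTerm A} : IsFT_D p → IsFT_Star p
end

/-- FEL Normal Form: `P ::= P^T | P^F | P^T ∧• P^*`. -/
inductive IsFNF {A : Type} : FTerm A → Prop
  | t {p : FTerm A} : IsFT_T p → IsFNF p
  | f {p : FTerm A} : IsFT_F p → IsFNF p
  | ts {p q : FTerm A} : IsFT_T p → IsFT_Star q → IsFNF (FTerm.and p q)

/-! ### SCL Normal Form grammar -/

/-- T-terms: `P^T ::= T | (a ∧◦ P^T) ∨◦ P^T`. -/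
inductive IsST_T {A : Type} : STerm A → Prop
  | tru : IsST_T STerm.tru
  | or (a : A) {p q : STerm A} :
      IsST_T p → IsST_T q → IsST_T (STerm.or (STerm.and (STerm.atom a) p) q)

/-- F-terms: `P^F ::= F | (a ∨◦ P^F) ∧◦ P^F`. -/
inductive IsST_F {A : Type} : STerm A → Prop
  | fls : IsST_F STerm.fls
  | and (a : A) {p q : STerm A} :
      IsST_F p → IsST_F q → IsST_F (STerm.and (STerm.or (STerm.atom a) p) q)

/-- ℓ-terms: `P^ℓ ::= (a ∧◦ P^T) ∨◦ P^F | (¬a ∧◦ P^T) ∨◦ P^F`. -/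
inductive IsST_L {A : Type} : STerm A → Prop
  | pos (a : A) {p q : STerm A} :
      IsST_T p → IsST_F q → IsST_L (STerm.or (STerm.and (STerm.atom a) p) q)
  | neg (a : A) {p q : STerm A} :
      IsST_T p → IsST_F q → IsST_L (STerm.or (STerm.and (STerm.neg (STerm.atom a)) p) q)

mutual
/-- `P^c ::= P^ℓ | P^* ∧◦ P^d`. -/
inductive IsST_C {A : Type} : STerm A → Prop
  | ell {p : STerm A} : IsST_L p → IsST_C p
  | and {p q : STerm A} : IsST_Star p → IsST_D q → IsST_C (STerm.and p q)
/-- `P^d ::= P^ℓ | P^* ∨◦ P^c`. -/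
inductive IsST_D {A : Type} : STerm A → Prop
  | ell {p : STerm A} : IsST_L p → IsST_D p
  | or {p q : STerm A} : IsST_Star p → IsST_C q → IsST_D (STerm.or p q)
/-- `P^* ::= P^c | P^d`. -/
inductive IsST_Star {A : Type} : STerm A → Prop
  | c {p : STerm A} : IsST_C p → IsST_Star p
  | d {p : STerm A} : IsST_D p → IsST_Star p
end

/-- SCL Normal Form: `P ::= P^T | P^F | P^T ∧◦ P^*`. -/
inductive IsSNF {A : Type} : STerm A → Prop
  | t {p : STerm A} : IsST_T p → IsSNF p
  | f {p : STerm A} : IsST_F p → IsSNF p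
  | ts {p q : STerm A} : IsST_T p → IsST_Star q → IsSNF (STerm.and p q)

/-! ### Trees with box leaves -/

/-- `𝒯_□`: trees over `A` with leaves in `{T, F, □}`. -/
inductive ETreeB (A : Type) : Type
  | tru  : ETreeB A
  | fls  : ETreeB A
  | box  : ETreeB A
  | node : ETreeB A → A → ETreeB A → ETreeB A

namespace ETreeB

/-- `X.substBox Y = X[□↦Y]`. -/
def substBox {A : Type} : ETreeB A → ETree A → ETree A
  | .tru, _ => ETree.tru
  | .fls, _ => ETree.fls
  | .box, y => y
  | .node l a r, y => ETree.node (substBox l y) a (substBox r y)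

def hasBox {A : Type} : ETreeB A → Prop
  | .tru => False
  | .fls => False
  | .box => True
  | .node l _ r => hasBox l ∨ hasBox r

def hasTru {A : Type} : ETreeB A → Prop
  | .tru => True
  | .fls => False
  | .box => False
  | .node l _ r => hasTru l ∨ hasTru r

def hasFls {A : Type} : ETreeB A → Prop
  | .tru => False
  | .fls => True
  | .box => False
  | .node l _ r => hasFls l ∨ hasFls r

end ETreeB

/-- `𝒯_{1,2}`: trees over `A` with leaves in `{T, F, □₁, □₂}`. -/
inductive ETree2 (A : Type) : Type
  | tru  : ETree2 A
  | fls  : ETree2 A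
  | box1 : ETree2 A
  | box2 : ETree2 A
  | node : ETree2 A → A → ETree2 A → ETree2 A

namespace ETree2

/-- `X.substBoxes Y Z = X[□₁↦Y, □₂↦Z]`. -/
def substBoxes {A : Type} : ETree2 A → ETree A → ETree A → ETree A
  | .tru, _, _ => ETree.tru
  | .fls, _, _ => ETree.fls
  | .box1, y, _ => y
  | .box2, _, z => z
  | .node l a r, y, z => ETree.node (substBoxes l y z) a (substBoxes r y z)

def hasBox1 {A : Type} : ETree2 A → Prop
  | .tru => False
  | .fls => False
  | .box1 => True
  | .box2 => False
  | .node l _ r => hasBox1 l ∨ hasBox1 r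

def hasBox2 {A : Type} : ETree2 A → Prop
  | .tru => False
  | .fls => False
  | .box1 => False
  | .box2 => True
  | .node l _ r => hasBox2 l ∨ hasBox2 r

def hasTru {A : Type} : ETree2 A → Prop
  | .tru => True
  | .fls => False
  | .box1 => False
  | .box2 => False
  | .node l _ r => hasTru l ∨ hasTru r

def hasFls {A : Type} : ETree2 A → Prop
  | .tru => False
  | .fls => True
  | .box1 => False
  | .box2 => False
  | .node l _ r => hasFls l ∨ hasFls r

end ETree2

namespace ETree

/-- `X[T↦□₁, F↦□₂]`. -/
def toBoxes {A : Type} : ETree A → ETree2 A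
  | .tru => ETree2.box1
  | .fls => ETree2.box2
  | .node l a r => ETree2.node (toBoxes l) a (toBoxes r)

/-- `X[T↦□]`. -/
def truToBox {A : Type} : ETree A → ETreeB A
  | .tru => ETreeB.box
  | .fls => ETreeB.fls
  | .node l a r => ETreeB.node (truToBox l) a (truToBox r)

/-- `X[F↦□]`. -/
def flsToBox {A : Type} : ETree A → ETreeB A
  | .tru => ETreeB.tru
  | .fls => ETreeB.box
  | .node l a r => ETreeB.node (flsToBox l) a (flsToBox r)

end ETree

/-! ### FEL decompositions -/

/-- Candidate conjunction decomposition (FEL):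
    `X = Y[□₁↦Z, □₂↦Z[T↦F]]`, `Y` contains both boxes, neither `T` nor `F`,
    and `Z` contains both `T` and `F`. -/
def IsCcdF {A : Type} (X : ETree A) (Y : ETree2 A) (Z : ETree A) : Prop :=
  X = Y.substBoxes Z (Z.subst ETree.fls ETree.fls) ∧
  Y.hasBox1 ∧ Y.hasBox2 ∧ ¬ Y.hasTru ∧ ¬ Y.hasFls ∧ Z.hasTru ∧ Z.hasFls

/-- Candidate disjunction decomposition (FEL):
    `X = Y[□₁↦Z[F↦T], □₂↦Z]` with the same side conditions. -/
def IsCddF {A : Type} (X : ETree A) (Y : ETree2 A) (Z : ETree A) : Prop :=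
  X = Y.substBoxes (Z.subst ETree.tru ETree.tru) Z ∧
  Y.hasBox1 ∧ Y.hasBox2 ∧ ¬ Y.hasTru ∧ ¬ Y.hasFls ∧ Z.hasTru ∧ Z.hasFls

/-- Conjunction decomposition (FEL): a ccd with `Z` of minimal depth. -/
def IsCdF {A : Type} (X : ETree A) (Y : ETree2 A) (Z : ETree A) : Prop :=
  IsCcdF X Y Z ∧ ∀ (Y' : ETree2 A) (Z' : ETree A), IsCcdF X Y' Z' → Z.depth ≤ Z'.depth

/-- Disjunction decomposition (FEL): a cdd with `Z` of minimal depth. -/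
def IsDdF {A : Type} (X : ETree A) (Y : ETree2 A) (Z : ETree A) : Prop :=
  IsCddF X Y Z ∧ ∀ (Y' : ETree2 A) (Z' : ETree A), IsCddF X Y' Z' → Z.depth ≤ Z'.depth

/-- T-*-decomposition (FEL): `X = Y[□↦Z]`, `Y` contains neither `T` nor `F`,
    and `Z` admits no nontrivial box decomposition. -/
def IsTsdF {A : Type} (X : ETree A) (Y : ETreeB A) (Z : ETree A) : Prop :=
  X = Y.substBox Z ∧ ¬ Y.hasTru ∧ ¬ Y.hasFls ∧
  ¬ ∃ (U : ETreeB A) (V : ETree A),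
      Z = U.substBox V ∧ U.hasBox ∧ U ≠ ETreeB.box ∧ ¬ U.hasTru ∧ ¬ U.hasFls

/-! ### SCL decompositions -/

/-- Candidate conjunction decomposition (SCL): `X = Y[□↦Z]`, `Y` contains `□`,
    `Y` contains `F` but not `T`, and `Z` contains both `T` and `F`. -/
def IsCcdS {A : Type} (X : ETree A) (Y : ETreeB A) (Z : ETree A) : Prop :=
  X = Y.substBox Z ∧ Y.hasBox ∧ Y.hasFls ∧ ¬ Y.hasTru ∧ Z.hasTru ∧ Z.hasFls

/-- Candidate disjunction decomposition (SCL): `X = Y[□↦Z]`, `Y` contains `□`,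
    `Y` contains `T` but not `F`, and `Z` contains both `T` and `F`. -/
def IsCddS {A : Type} (X : ETree A) (Y : ETreeB A) (Z : ETree A) : Prop :=
  X = Y.substBox Z ∧ Y.hasBox ∧ Y.hasTru ∧ ¬ Y.hasFls ∧ Z.hasTru ∧ Z.hasFls

/-- Conjunction decomposition (SCL): a ccd with `Z` of minimal depth. -/
def IsCdS {A : Type} (X : ETree A) (Y : ETreeB A) (Z : ETree A) : Prop :=
  IsCcdS X Y Z ∧ ∀ (Y' : ETreeB A) (Z' : ETree A), IsCcdS X Y' Z' → Z.depth ≤ Z'.depth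

/-- Disjunction decomposition (SCL): a cdd with `Z` of minimal depth. -/
def IsDdS {A : Type} (X : ETree A) (Y : ETreeB A) (Z : ETree A) : Prop :=
  IsCddS X Y Z ∧ ∀ (Y' : ETreeB A) (Z' : ETree A), IsCddS X Y' Z' → Z.depth ≤ Z'.depth

/-- Candidate T-*-decomposition (SCL). -/
def IsCtsdS {A : Type} (X : ETree A) (Y : ETreeB A) (Z : ETree A) : Prop :=
  X = Y.substBox Z ∧ ¬ Y.hasTru ∧ ¬ Y.hasFls ∧
  ¬ ∃ (U : ETreeB A) (V : ETree A),
      Z = U.substBox V ∧ U.hasBox ∧ U ≠ ETreeB.box ∧ ¬ U.hasTru ∧ ¬ U.hasFls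

/-- T-*-decomposition (SCL): a ctsd with `Z` of minimal depth. -/
def IsTsdS {A : Type} (X : ETree A) (Y : ETreeB A) (Z : ETree A) : Prop :=
  IsCtsdS X Y Z ∧ ∀ (Y' : ETreeB A) (Z' : ETree A), IsCtsdS X Y' Z' → Z.depth ≤ Z'.depth

/-- The translation `h : FTerm → STerm` from FEL-terms to SCL-terms. -/
def hTrans {A : Type} : FTerm A → STerm A
  | FTerm.tru => STerm.tru
  | FTerm.fls => STerm.fls
  | FTerm.atom a => STerm.atom a
  | FTerm.neg p => STerm.neg (hTrans p)
  | FTerm.and p q => STerm.and (STerm.or (hTrans p) (STerm.and (hTrans q) STerm.fls)) (hTrans q)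
  | FTerm.or p q => STerm.or (STerm.and (hTrans p) (STerm.or (hTrans q) STerm.tru)) (hTrans q)

/-! ### Auxiliary development for the completeness proof -/

namespace SCLComplete

open STerm

variable {A : Type}

local infixl:65 " ⋀ " => STerm.and
local infixl:60 " ⋁ " => STerm.or
local prefix:100 "∼" => STerm.neg
local infix:45 " ≃ " => EqFSCL

instance : Trans (@EqFSCL A) (@EqFSCL A) (@EqFSCL A) := ⟨EqFSCL.trans⟩

namespace Eq0

theorem rfl' {p : STerm A} : p ≃ p := EqFSCL.refl p

theorem nc {p q : STerm A} (h : p ≃ q) : ∼p ≃ ∼q := EqFSCL.neg_congr h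
theorem ac {p p' q q' : STerm A} (h : p ≃ p') (h' : q ≃ q') : p ⋀ q ≃ p' ⋀ q' :=
  EqFSCL.and_congr h h'
theorem oc {p p' q q' : STerm A} (h : p ≃ p') (h' : q ≃ q') : p ⋁ q ≃ p' ⋁ q' :=
  EqFSCL.or_congr h h'
theorem acl {p p' q : STerm A} (h : p ≃ p') : p ⋀ q ≃ p' ⋀ q := ac h rfl'
theorem acr {p q q' : STerm A} (h' : q ≃ q') : p ⋀ q ≃ p ⋀ q' := ac rfl' h'
theorem ocl {p p' q : STerm A} (h : p ≃ p') : p ⋁ q ≃ p' ⋁ q := oc h rfl'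
theorem ocr {p q q' : STerm A} (h' : q ≃ q') : p ⋁ q ≃ p ⋁ q' := oc rfl' h'

theorem notT : (∼tru : STerm A) ≃ fls := EqFSCL.scl1.symm
theorem notF : (∼fls : STerm A) ≃ tru := (nc EqFSCL.scl1).trans (EqFSCL.scl3 _)
theorem neg_or (x y : STerm A) : ∼(x ⋁ y) ≃ ∼x ⋀ ∼y :=
  (nc (EqFSCL.scl2 x y)).trans (EqFSCL.scl3 _)
theorem neg_and (x y : STerm A) : ∼(x ⋀ y) ≃ ∼x ⋁ ∼y :=
  ((EqFSCL.scl2 _ _).trans (nc (ac (EqFSCL.scl3 x) (EqFSCL.scl3 y)))).symm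

theorem and_assoc (x y z : STerm A) : (x ⋀ y) ⋀ z ≃ x ⋀ (y ⋀ z) := EqFSCL.scl4 x y z

theorem or_assoc (x y z : STerm A) : (x ⋁ y) ⋁ z ≃ x ⋁ (y ⋁ z) := by
  calc (x ⋁ y) ⋁ z ≃ ∼(∼(x ⋁ y) ⋀ ∼z) := EqFSCL.scl2 _ _
    _ ≃ ∼((∼x ⋀ ∼y) ⋀ ∼z) := nc (acl (neg_or x y))
    _ ≃ ∼(∼x ⋀ (∼y ⋀ ∼z)) := nc (and_assoc _ _ _)
    _ ≃ ∼(∼x ⋀ ∼(y ⋁ z)) := nc (acr (neg_or y z).symm)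
    _ ≃ x ⋁ (y ⋁ z) := (EqFSCL.scl2 _ _).symm

theorem T_and (x : STerm A) : tru ⋀ x ≃ x := EqFSCL.scl5 x
theorem and_T (x : STerm A) : x ⋀ tru ≃ x := EqFSCL.scl6 x
theorem F_and (x : STerm A) : fls ⋀ x ≃ fls := EqFSCL.scl7 x

theorem or_F (x : STerm A) : x ⋁ fls ≃ x := by
  calc x ⋁ fls ≃ ∼(∼x ⋀ ∼fls) := EqFSCL.scl2 _ _
    _ ≃ ∼(∼x ⋀ tru) := nc (acr notF)
    _ ≃ ∼∼x := nc (and_T _)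
    _ ≃ x := EqFSCL.scl3 x

theorem F_or (x : STerm A) : fls ⋁ x ≃ x := by
  calc fls ⋁ x ≃ ∼(∼fls ⋀ ∼x) := EqFSCL.scl2 _ _
    _ ≃ ∼(tru ⋀ ∼x) := nc (acl notF)
    _ ≃ ∼∼x := nc (T_and _)
    _ ≃ x := EqFSCL.scl3 x

theorem T_or (x : STerm A) : tru ⋁ x ≃ tru := by
  calc tru ⋁ x ≃ ∼(∼tru ⋀ ∼x) := EqFSCL.scl2 _ _
    _ ≃ ∼(fls ⋀ ∼x) := nc (acl notT)
    _ ≃ ∼fls := nc (F_and _)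
    _ ≃ tru := notF

/-- dual of scl8 : `x ⋁ T = ¬x ⋁ T`. -/
theorem or_T_neg (x : STerm A) : x ⋁ tru ≃ ∼x ⋁ tru := by
  have h1 : ∀ y : STerm A, y ⋁ tru ≃ ∼(∼y ⋀ fls) := fun y =>
    calc y ⋁ tru ≃ ∼(∼y ⋀ ∼tru) := EqFSCL.scl2 _ _
      _ ≃ ∼(∼y ⋀ fls) := nc (acr notT)
  calc x ⋁ tru ≃ ∼(∼x ⋀ fls) := h1 x
    _ ≃ ∼(∼∼x ⋀ fls) := nc (EqFSCL.scl8 _)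
    _ ≃ ∼(∼∼x ⋀ ∼tru) := nc (acr notT.symm)
    _ ≃ ∼x ⋁ tru := (EqFSCL.scl2 _ _).symm

/-- dual of scl10. -/
theorem dscl10 (x y z : STerm A) :
    (x ⋁ y) ⋀ (z ⋁ tru) ≃ (x ⋀ (z ⋁ tru)) ⋁ (y ⋀ (z ⋁ tru)) := by
  have h := EqFSCL.scl10 (∼x) (∼y) (∼z)
  have h2 := nc h
  -- LHS: ∼((∼x ⋀ ∼y) ⋁ (∼z ⋀ F)) ≃ (x ⋁ y) ⋀ (z ⋁ T)
  have hzF : ∼(∼z ⋀ fls) ≃ z ⋁ tru := by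
    calc ∼(∼z ⋀ fls) ≃ ∼∼z ⋁ ∼fls := neg_and _ _
      _ ≃ z ⋁ tru := oc (EqFSCL.scl3 _) notF
  have hl : ∼((∼x ⋀ ∼y) ⋁ (∼z ⋀ fls)) ≃ (x ⋁ y) ⋀ (z ⋁ tru) := by
    calc ∼((∼x ⋀ ∼y) ⋁ (∼z ⋀ fls)) ≃ ∼(∼x ⋀ ∼y) ⋀ ∼(∼z ⋀ fls) := neg_or _ _
      _ ≃ (∼∼x ⋁ ∼∼y) ⋀ (z ⋁ tru) := ac (neg_and _ _) hzF
      _ ≃ (x ⋁ y) ⋀ (z ⋁ tru) := ac (oc (EqFSCL.scl3 _) (EqFSCL.scl3 _)) rfl'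
  have hr : ∼((∼x ⋁ (∼z ⋀ fls)) ⋀ (∼y ⋁ (∼z ⋀ fls))) ≃
      (x ⋀ (z ⋁ tru)) ⋁ (y ⋀ (z ⋁ tru)) := by
    have piece : ∀ w : STerm A, ∼(∼w ⋁ (∼z ⋀ fls)) ≃ w ⋀ (z ⋁ tru) := fun w =>
      calc ∼(∼w ⋁ (∼z ⋀ fls)) ≃ ∼∼w ⋀ ∼(∼z ⋀ fls) := neg_or _ _
        _ ≃ w ⋀ (z ⋁ tru) := ac (EqFSCL.scl3 _) hzF
    calc ∼((∼x ⋁ (∼z ⋀ fls)) ⋀ (∼y ⋁ (∼z ⋀ fls)))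
        ≃ ∼(∼x ⋁ (∼z ⋀ fls)) ⋁ ∼(∼y ⋁ (∼z ⋀ fls)) := neg_and _ _
      _ ≃ (x ⋀ (z ⋁ tru)) ⋁ (y ⋀ (z ⋁ tru)) := oc (piece x) (piece y)
  exact (hl.symm.trans h2).trans hr

end Eq0
end SCLComplete
namespace SCLComplete
open STerm
variable {A : Type}

local infixl:65 " ⋀ " => STerm.and
local infixl:60 " ⋁ " => STerm.or
local prefix:100 "∼" => STerm.neg
local infix:45 " ≃ " => EqFSCL

namespace Eq0

/-- `x` absorbs on the right into `⋀ F` : characteristic property of F-terms. -/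
def Fabs (x : STerm A) : Prop := x ⋀ fls ≃ x
/-- characteristic property of T-terms. -/
def Tabs (x : STerm A) : Prop := x ⋁ tru ≃ x

theorem Fabs.and {f : STerm A} (hf : Fabs f) (x : STerm A) : f ⋀ x ≃ f := by
  calc f ⋀ x ≃ (f ⋀ fls) ⋀ x := acl hf.symm
    _ ≃ f ⋀ (fls ⋀ x) := and_assoc _ _ _
    _ ≃ f ⋀ fls := acr (F_and _)
    _ ≃ f := hf

theorem Tabs.or {t : STerm A} (ht : Tabs t) (x : STerm A) : t ⋁ x ≃ t := by
  calc t ⋁ x ≃ (t ⋁ tru) ⋁ x := ocl ht.symm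
    _ ≃ t ⋁ (tru ⋁ x) := or_assoc _ _ _
    _ ≃ t ⋁ tru := ocr (T_or _)
    _ ≃ t := ht

theorem Tabs.negchar {t : STerm A} (ht : Tabs t) : ∼t ≃ t ⋀ fls := by
  calc ∼t ≃ ∼(t ⋁ tru) := nc ht.symm
    _ ≃ ∼t ⋀ ∼tru := neg_or _ _
    _ ≃ ∼t ⋀ fls := acr notT
    _ ≃ t ⋀ fls := (EqFSCL.scl8 t).symm

theorem Fabs.negchar {f : STerm A} (hf : Fabs f) : ∼f ≃ f ⋁ tru := by
  calc ∼f ≃ ∼(f ⋀ fls) := nc hf.symm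
    _ ≃ ∼f ⋁ ∼fls := neg_and _ _
    _ ≃ ∼f ⋁ tru := ocr notF
    _ ≃ f ⋁ tru := (or_T_neg f).symm

/-- scl10' : distribution of `⋁ f` over a conjunction, for an F-term f. -/
theorem or_f_distrib {f : STerm A} (hf : Fabs f) (x y : STerm A) :
    (x ⋀ y) ⋁ f ≃ (x ⋁ f) ⋀ (y ⋁ f) := by
  calc (x ⋀ y) ⋁ f ≃ (x ⋀ y) ⋁ (f ⋀ fls) := ocr hf.symm
    _ ≃ (x ⋁ (f ⋀ fls)) ⋀ (y ⋁ (f ⋀ fls)) := EqFSCL.scl10 _ _ _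
    _ ≃ (x ⋁ f) ⋀ (y ⋁ f) := ac (ocr hf) (ocr hf)

/-- L6' : distribution of `⋀ t` over a disjunction, for a T-term t. -/
theorem and_t_distrib {t : STerm A} (ht : Tabs t) (x y : STerm A) :
    (x ⋁ y) ⋀ t ≃ (x ⋀ t) ⋁ (y ⋀ t) := by
  calc (x ⋁ y) ⋀ t ≃ (x ⋁ y) ⋀ (t ⋁ tru) := acr ht.symm
    _ ≃ (x ⋀ (t ⋁ tru)) ⋁ (y ⋀ (t ⋁ tru)) := dscl10 _ _ _
    _ ≃ (x ⋀ t) ⋁ (y ⋀ t) := oc (acr ht) (acr ht)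

/-- scl9 with T-term: `t ⋀ y ≃ (t ⋀ F) ⋁ y`. -/
theorem t_and_eq {t : STerm A} (ht : Tabs t) (y : STerm A) : t ⋀ y ≃ (t ⋀ fls) ⋁ y := by
  calc t ⋀ y ≃ (t ⋁ tru) ⋀ y := acl ht.symm
    _ ≃ (t ⋀ fls) ⋁ y := (EqFSCL.scl9 t y).symm

/-- `(x ⋁ f) ⋀ t ≃ (x ⋀ t) ⋁ f` (B_T). -/
theorem bt {t f : STerm A} (ht : Tabs t) (hf : Fabs f) (x : STerm A) :
    (x ⋁ f) ⋀ t ≃ (x ⋀ t) ⋁ f := by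
  calc (x ⋁ f) ⋀ t ≃ (x ⋀ t) ⋁ (f ⋀ t) := and_t_distrib ht _ _
    _ ≃ (x ⋀ t) ⋁ f := ocr (hf.and t)

/-- OF : `(u ⋁ v) ⋀ F ≃ ∼u ⋀ (v ⋀ F)`. -/
theorem of' (u v : STerm A) : (u ⋁ v) ⋀ fls ≃ ∼u ⋀ (v ⋀ fls) := by
  calc (u ⋁ v) ⋀ fls ≃ ∼(u ⋁ v) ⋀ fls := EqFSCL.scl8 _
    _ ≃ (∼u ⋀ ∼v) ⋀ fls := acl (neg_or _ _)
    _ ≃ ∼u ⋀ (∼v ⋀ fls) := and_assoc _ _ _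
    _ ≃ ∼u ⋀ (v ⋀ fls) := acr (EqFSCL.scl8 v).symm

/-- S2 : `(x ⋁ g) ⋀ F ≃ ∼x ⋀ g` for an F-term g. -/
theorem s2 {g : STerm A} (hg : Fabs g) (x : STerm A) : (x ⋁ g) ⋀ fls ≃ ∼x ⋀ g := by
  calc (x ⋁ g) ⋀ fls ≃ ∼x ⋀ (g ⋀ fls) := of' _ _
    _ ≃ ∼x ⋀ g := acr hg

/-- GSW : the key swap lemma `(∼x ⋁ q) ⋀ g ≃ (x ⋁ g) ⋀ q` for F-terms q, g. -/
theorem gsw {q g : STerm A} (hq : Fabs q) (hg : Fabs g) (x : STerm A) :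
    (∼x ⋁ q) ⋀ g ≃ (x ⋁ g) ⋀ q := by
  calc (∼x ⋁ q) ⋀ g ≃ (∼x ⋁ q) ⋀ (g ⋀ fls) := acr hg.symm
    _ ≃ ((∼x ⋁ q) ⋀ g) ⋀ fls := (and_assoc _ _ _).symm
    _ ≃ ∼((∼x ⋁ q) ⋀ g) ⋀ fls := EqFSCL.scl8 _
    _ ≃ (∼(∼x ⋁ q) ⋁ ∼g) ⋀ fls := acl (neg_and _ _)
    _ ≃ ((∼∼x ⋀ ∼q) ⋁ ∼g) ⋀ fls := acl (ocl (neg_or _ _))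
    _ ≃ ((x ⋀ (q ⋁ tru)) ⋁ (g ⋁ tru)) ⋀ fls :=
        acl (oc (ac (EqFSCL.scl3 _) hq.negchar) hg.negchar)
    _ ≃ (((x ⋀ (q ⋁ tru)) ⋁ g) ⋁ tru) ⋀ fls := acl (or_assoc _ _ _).symm
    _ ≃ (((x ⋀ (q ⋁ tru)) ⋁ g) ⋀ fls) ⋁ fls := (EqFSCL.scl9 _ _).symm
    _ ≃ ((x ⋀ (q ⋁ tru)) ⋁ g) ⋀ fls := or_F _
    _ ≃ ((x ⋀ (q ⋁ tru)) ⋁ (g ⋀ fls)) ⋀ fls := acl (ocr hg.symm)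
    _ ≃ ((x ⋁ (g ⋀ fls)) ⋀ ((q ⋁ tru) ⋁ (g ⋀ fls))) ⋀ fls := acl (EqFSCL.scl10 _ _ _)
    _ ≃ ((x ⋁ g) ⋀ ((q ⋁ tru) ⋁ g)) ⋀ fls := acl (ac (ocr hg) (ocr hg))
    _ ≃ ((x ⋁ g) ⋀ (q ⋁ (tru ⋁ g))) ⋀ fls := acl (acr (or_assoc _ _ _))
    _ ≃ ((x ⋁ g) ⋀ (q ⋁ tru)) ⋀ fls := acl (acr (ocr (T_or _)))
    _ ≃ (x ⋁ g) ⋀ ((q ⋁ tru) ⋀ fls) := and_assoc _ _ _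
    _ ≃ (x ⋁ g) ⋀ ((q ⋀ fls) ⋁ fls) := acr (EqFSCL.scl9 _ _).symm
    _ ≃ (x ⋁ g) ⋀ (q ⋀ fls) := acr (or_F _)
    _ ≃ (x ⋁ g) ⋀ q := acr hq

/-- DECOMP : `(x ⋀ p) ⋁ q ≃ (x ⋁ q) ⋀ p` when `p ⋁ q ≃ p` and q is an F-term. -/
theorem decomp {p q : STerm A} (hpq : p ⋁ q ≃ p) (hq : Fabs q) (x : STerm A) :
    (x ⋀ p) ⋁ q ≃ (x ⋁ q) ⋀ p := by
  calc (x ⋀ p) ⋁ q ≃ (x ⋁ q) ⋀ (p ⋁ q) := or_f_distrib hq _ _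
    _ ≃ (x ⋁ q) ⋀ p := acr hpq

/-- W-half : `(x ⋁ y) ⋀ f ≃ (∼x ⋁ f) ⋀ (y ⋀ f)` for an F-term f. -/
theorem whalf {f : STerm A} (hf : Fabs f) (x y : STerm A) :
    (x ⋁ y) ⋀ f ≃ (∼x ⋁ f) ⋀ (y ⋀ f) := by
  calc (x ⋁ y) ⋀ f ≃ (x ⋁ y) ⋀ (f ⋀ fls) := acr hf.symm
    _ ≃ ((x ⋁ y) ⋀ f) ⋀ fls := (and_assoc _ _ _).symm
    _ ≃ ∼((x ⋁ y) ⋀ f) ⋀ fls := EqFSCL.scl8 _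
    _ ≃ (∼(x ⋁ y) ⋁ ∼f) ⋀ fls := acl (neg_and _ _)
    _ ≃ ((∼x ⋀ ∼y) ⋁ (f ⋁ tru)) ⋀ fls := acl (oc (neg_or _ _) hf.negchar)
    _ ≃ (((∼x ⋀ ∼y) ⋁ f) ⋁ tru) ⋀ fls := acl (or_assoc _ _ _).symm
    _ ≃ (((∼x ⋀ ∼y) ⋁ f) ⋀ fls) ⋁ fls := (EqFSCL.scl9 _ _).symm
    _ ≃ ((∼x ⋀ ∼y) ⋁ f) ⋀ fls := or_F _
    _ ≃ ((∼x ⋁ f) ⋀ (∼y ⋁ f)) ⋀ fls := acl (or_f_distrib hf _ _)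
    _ ≃ (∼x ⋁ f) ⋀ ((∼y ⋁ f) ⋀ fls) := and_assoc _ _ _
    _ ≃ (∼x ⋁ f) ⋀ (∼∼y ⋀ f) := acr (s2 hf _)
    _ ≃ (∼x ⋁ f) ⋀ (y ⋀ f) := acr (acl (EqFSCL.scl3 _))

/-- W : `(x ⋁ y) ⋀ f ≃ (x ⋁ (y ⋀ f)) ⋀ f` for an F-term f. -/
theorem w {f : STerm A} (hf : Fabs f) (x y : STerm A) :
    (x ⋁ y) ⋀ f ≃ (x ⋁ (y ⋀ f)) ⋀ f := by
  have hff : f ⋀ f ≃ f := hf.and f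
  calc (x ⋁ y) ⋀ f ≃ (∼x ⋁ f) ⋀ (y ⋀ f) := whalf hf _ _
    _ ≃ (∼x ⋁ f) ⋀ (y ⋀ (f ⋀ f)) := acr (acr hff.symm)
    _ ≃ (∼x ⋁ f) ⋀ ((y ⋀ f) ⋀ f) := acr (and_assoc _ _ _).symm
    _ ≃ (x ⋁ (y ⋀ f)) ⋀ f := (whalf hf _ _).symm

end Eq0

/-! ### Duality -/

/-- The dual of an SCL-term. -/
def sdual : STerm A → STerm A
  | .atom a => .atom a
  | .tru => .fls
  | .fls => .tru
  | .neg p => .neg (sdual p)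
  | .and p q => .or (sdual p) (sdual q)
  | .or p q => .and (sdual p) (sdual q)

theorem sdual_sdual (p : STerm A) : sdual (sdual p) = p := by
  induction p <;> simp [sdual, *]

open Eq0 in
theorem eq_dual {p q : STerm A} (h : p ≃ q) : sdual p ≃ sdual q := by
  induction h with
  | refl p => exact rfl'
  | symm _ ih => exact ih.symm
  | trans _ _ ih1 ih2 => exact ih1.trans ih2
  | neg_congr _ ih => exact nc ih
  | and_congr _ _ ih1 ih2 => exact oc ih1 ih2
  | or_congr _ _ ih1 ih2 => exact ac ih1 ih2
  | scl1 => exact notF.symm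
  | scl2 x y =>
      exact ((neg_or _ _).trans (ac (EqFSCL.scl3 _) (EqFSCL.scl3 _))).symm
  | scl3 x => exact EqFSCL.scl3 _
  | scl4 x y z => exact or_assoc _ _ _
  | scl5 x => exact F_or _
  | scl6 x => exact or_F _
  | scl7 x => exact T_or _
  | scl8 x => exact or_T_neg _
  | scl9 x y => exact (EqFSCL.scl9 _ _).symm
  | scl10 x y z => exact dscl10 _ _ _

end SCLComplete
namespace SCLComplete
open STerm
variable {A : Type}

local infixl:65 " ⋀ " => STerm.and
local infixl:60 " ⋁ " => STerm.or
local prefix:100 "∼" => STerm.neg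
local infix:45 " ≃ " => EqFSCL

/-! ### Normal form datatypes -/

/-- T-terms : `tru` or `(a ⋀ p) ⋁ q`. -/
inductive NT (A : Type) : Type
  | tru : NT A
  | node : A → NT A → NT A → NT A

/-- F-terms : `fls` or `(a ⋁ u) ⋀ v`. -/
inductive NF (A : Type) : Type
  | fls : NF A
  | node : A → NF A → NF A → NF A

/-- star terms. `lit b a p q` is `(ℓ ⋀ p) ⋁ q` with `ℓ = a` (b = false) or `¬a`. -/
inductive NS (A : Type) : Type
  | lit : Bool → A → NT A → NF A → NS A
  | and : NS A → NS A → NS A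
  | or : NS A → NS A → NS A

/-- normal forms. -/
inductive NN (A : Type) : Type
  | t : NT A → NN A
  | f : NF A → NN A
  | ts : NT A → NS A → NN A

def NT.emb : NT A → STerm A
  | .tru => .tru
  | .node a p q => (.atom a ⋀ p.emb) ⋁ q.emb

def NF.emb : NF A → STerm A
  | .fls => .fls
  | .node a u v => (.atom a ⋁ u.emb) ⋀ v.emb

def NS.lhead (b : Bool) (a : A) : STerm A := if b then ∼(.atom a) else .atom a

def NS.emb : NS A → STerm A
  | .lit b a p q => (NS.lhead b a ⋀ p.emb) ⋁ q.emb
  | .and s t => s.emb ⋀ t.emb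
  | .or s t => s.emb ⋁ t.emb

def NN.emb : NN A → STerm A
  | .t p => p.emb
  | .f q => q.emb
  | .ts p s => p.emb ⋀ s.emb

def NS.isD : NS A → Prop
  | .and _ _ => False
  | _ => True

def NS.isC : NS A → Prop
  | .or _ _ => False
  | _ => True

def NS.wf : NS A → Prop
  | .lit _ _ _ _ => True
  | .and s t => s.wf ∧ t.wf ∧ t.isD
  | .or s t => s.wf ∧ t.wf ∧ t.isC

def NN.wf : NN A → Prop
  | .ts _ s => s.wf
  | _ => True

def NS.size : NS A → ℕ
  | .lit _ _ _ _ => 1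
  | .and s t => s.size + t.size + 1
  | .or s t => s.size + t.size + 1

namespace Eq0

theorem tabs_nt (t : NT A) : Tabs t.emb := by
  induction t with
  | tru => exact T_or _
  | node a p q ihp ihq =>
      show ((.atom a ⋀ p.emb) ⋁ q.emb) ⋁ tru ≃ _
      calc ((.atom a ⋀ p.emb) ⋁ q.emb) ⋁ tru ≃ (.atom a ⋀ p.emb) ⋁ (q.emb ⋁ tru) :=
            or_assoc _ _ _
        _ ≃ (.atom a ⋀ p.emb) ⋁ q.emb := ocr ihq

theorem fabs_nf (f : NF A) : Fabs f.emb := by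
  induction f with
  | fls => exact F_and _
  | node a u v ihu ihv =>
      show ((.atom a ⋁ u.emb) ⋀ v.emb) ⋀ fls ≃ _
      calc ((.atom a ⋁ u.emb) ⋀ v.emb) ⋀ fls ≃ (.atom a ⋁ u.emb) ⋀ (v.emb ⋀ fls) :=
            and_assoc _ _ _
        _ ≃ (.atom a ⋁ u.emb) ⋀ v.emb := acr ihv

/-! ### Operations on normal forms -/

end Eq0

/-- disjunction of two F-terms. -/
def NF.fo : NF A → NF A → NF A
  | .fls, g => g
  | .node a u v, g => .node a (u.fo g) (v.fo g)

/-- conjunction of two T-terms. -/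
def NT.na : NT A → NT A → NT A
  | .tru, t => t
  | .node a p q, t => .node a (p.na t) (q.na t)

/-- conjunction of a T-term and an F-term. -/
def NT.tf : NT A → NF A → NF A
  | .tru, f => f
  | .node a p q, f => .node a (q.tf f) (p.tf f)

/-- disjunction of an F-term and a T-term. -/
def NF.ft : NF A → NT A → NT A
  | .fls, t => t
  | .node a u v, t => .node a (v.ft t) (u.ft t)

def NT.neg (t : NT A) : NF A := t.tf .fls
def NF.neg (f : NF A) : NT A := f.ft .tru

/-- negation of a star term. -/
def NS.neg : NS A → NS A
  | .lit b a p q => .lit (!b) a q.neg p.neg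
  | .and s t => .or s.neg t.neg
  | .or s t => .and s.neg t.neg

/-- conjunction of a star term and a T-term. -/
def NS.st : NS A → NT A → NS A
  | .lit b a p q, t => .lit b a (p.na t) q
  | .and s u, t => .and s (u.st t)
  | .or s u, t => .or (s.st t) (u.st t)

/-- simultaneous substitution: `sim s f g` has tree `S[T↦f, F↦g]`. -/
def NS.sim : NS A → NF A → NF A → NF A
  | .lit false a p q, f, g => .node a (q.fo g) (p.tf f)
  | .lit true a p q, f, g => .node a (p.tf f) (q.fo g)
  | .and s t, f, g => s.sim (t.sim f g) g
  | .or s t, f, g => s.sim f (t.sim f g)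

/-- conjunction of a star term and an F-term. -/
def NS.sf (s : NS A) (f : NF A) : NF A := s.sim f .fls

/-- conjunction of two star terms (re-associating). -/
def NS.ss : NS A → NS A → NS A
  | x, .and s t => (x.ss s).ss t
  | x, s => .and x s

def NN.neg : NN A → NN A
  | .t p => .f p.neg
  | .f q => .t q.neg
  | .ts p s => .ts p s.neg

def NN.and : NN A → NN A → NN A
  | .f p, _ => .f p
  | .t p, .t q => .t (p.na q)
  | .t p, .f q => .f (p.tf q)
  | .t p, .ts q s => .ts (p.na q) s
  | .ts p s, .t q => .ts p (s.st q)
  | .ts p s, .f q => .f (p.tf (s.sf q))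
  | .ts p s, .ts q s' => .ts p ((s.st q).ss s')

/-- the normalization function. -/
def nf : STerm A → NN A
  | .tru => .t .tru
  | .fls => .f .fls
  | .atom a => .ts .tru (.lit false a .tru .fls)
  | .neg p => (nf p).neg
  | .and p q => (nf p).and (nf q)
  | .or p q => (((nf p).neg.and (nf q).neg)).neg

end SCLComplete
namespace SCLComplete
open STerm
variable {A : Type}

local infixl:65 " ⋀ " => STerm.and
local infixl:60 " ⋁ " => STerm.or
local prefix:100 "∼" => STerm.neg
local infix:45 " ≃ " => EqFSCL

/-! ### Mirror (for duality transport) -/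

def NT.mir : NT A → NF A
  | .tru => .fls
  | .node a p q => .node a p.mir q.mir

def NF.mir : NF A → NT A
  | .fls => .tru
  | .node a u v => .node a u.mir v.mir

theorem NT.mir_mir (t : NT A) : t.mir.mir = t := by
  induction t <;> simp [NT.mir, NF.mir, *]

theorem NF.mir_mir (f : NF A) : f.mir.mir = f := by
  induction f <;> simp [NT.mir, NF.mir, *]

theorem sdual_embT (t : NT A) : sdual t.emb = t.mir.emb := by
  induction t <;> simp [NT.emb, NF.emb, NT.mir, sdual, *]

theorem sdual_embF (f : NF A) : sdual f.emb = f.mir.emb := by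
  induction f <;> simp [NT.emb, NF.emb, NF.mir, sdual, *]

theorem NF.ft_eq_mir (f : NF A) (t : NT A) : f.ft t = (f.mir.tf t.mir).mir := by
  induction f with
  | fls => simp [NF.ft, NF.mir, NT.tf, NT.mir_mir]
  | node a u v ihu ihv => simp [NF.ft, NF.mir, NT.tf, NT.mir, ihu, ihv]

namespace Eq0

theorem fo_correct (f g : NF A) : f.emb ⋁ g.emb ≃ (f.fo g).emb := by
  induction f with
  | fls => exact F_or _
  | node a u v ihu ihv =>
      show ((.atom a ⋁ u.emb) ⋀ v.emb) ⋁ g.emb ≃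
        (.atom a ⋁ (u.fo g).emb) ⋀ (v.fo g).emb
      calc ((.atom a ⋁ u.emb) ⋀ v.emb) ⋁ g.emb
          ≃ ((.atom a ⋁ u.emb) ⋁ g.emb) ⋀ (v.emb ⋁ g.emb) := or_f_distrib (fabs_nf g) _ _
        _ ≃ (.atom a ⋁ (u.emb ⋁ g.emb)) ⋀ (v.emb ⋁ g.emb) := acl (or_assoc _ _ _)
        _ ≃ (.atom a ⋁ (u.fo g).emb) ⋀ (v.fo g).emb := ac (ocr ihu) ihv

theorem na_correct (p t : NT A) : p.emb ⋀ t.emb ≃ (p.na t).emb := by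
  induction p with
  | tru => exact T_and _
  | node a u v ihu ihv =>
      show ((.atom a ⋀ u.emb) ⋁ v.emb) ⋀ t.emb ≃
        (.atom a ⋀ (u.na t).emb) ⋁ (v.na t).emb
      calc ((.atom a ⋀ u.emb) ⋁ v.emb) ⋀ t.emb
          ≃ ((.atom a ⋀ u.emb) ⋀ t.emb) ⋁ (v.emb ⋀ t.emb) := and_t_distrib (tabs_nt t) _ _
        _ ≃ (.atom a ⋀ (u.emb ⋀ t.emb)) ⋁ (v.emb ⋀ t.emb) := ocl (and_assoc _ _ _)
        _ ≃ (.atom a ⋀ (u.na t).emb) ⋁ (v.na t).emb := oc (acr ihu) ihv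

theorem tf_correct (t : NT A) (f : NF A) : t.emb ⋀ f.emb ≃ (t.tf f).emb := by
  induction t with
  | tru => exact T_and _
  | node a p q ihp ihq =>
      show ((.atom a ⋀ p.emb) ⋁ q.emb) ⋀ f.emb ≃
        (.atom a ⋁ (q.tf f).emb) ⋀ (p.tf f).emb
      have htt : Tabs ((STerm.atom a ⋀ p.emb) ⋁ q.emb) := tabs_nt (NT.node a p q)
      calc ((.atom a ⋀ p.emb) ⋁ q.emb) ⋀ f.emb
          ≃ ((((.atom a ⋀ p.emb) ⋁ q.emb)) ⋀ fls) ⋁ f.emb := t_and_eq htt _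
        _ ≃ (∼(.atom a ⋀ p.emb) ⋀ (q.emb ⋀ fls)) ⋁ f.emb := ocl (of' _ _)
        _ ≃ ((∼(.atom a) ⋁ ∼p.emb) ⋀ (q.emb ⋀ fls)) ⋁ f.emb := ocl (acl (neg_and _ _))
        _ ≃ ((∼(.atom a) ⋁ (p.emb ⋀ fls)) ⋀ (q.emb ⋀ fls)) ⋁ f.emb :=
            ocl (acl (ocr (tabs_nt p).negchar))
        _ ≃ ((∼(.atom a) ⋁ (p.emb ⋀ fls)) ⋁ f.emb) ⋀ ((q.emb ⋀ fls) ⋁ f.emb) :=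
            or_f_distrib (fabs_nf f) _ _
        _ ≃ (∼(.atom a) ⋁ ((p.emb ⋀ fls) ⋁ f.emb)) ⋀ ((q.emb ⋁ tru) ⋀ f.emb) :=
            ac (or_assoc _ _ _) (EqFSCL.scl9 _ _)
        _ ≃ (∼(.atom a) ⋁ ((p.emb ⋁ tru) ⋀ f.emb)) ⋀ (q.emb ⋀ f.emb) :=
            ac (ocr (EqFSCL.scl9 _ _)) (acl (tabs_nt q))
        _ ≃ (∼(.atom a) ⋁ (p.emb ⋀ f.emb)) ⋀ (q.emb ⋀ f.emb) := acl (ocr (acl (tabs_nt p)))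
        _ ≃ (∼(.atom a) ⋁ (p.tf f).emb) ⋀ (q.tf f).emb := ac (ocr ihp) ihq
        _ ≃ (.atom a ⋁ (q.tf f).emb) ⋀ (p.tf f).emb :=
            gsw (fabs_nf (p.tf f)) (fabs_nf (q.tf f)) _

theorem ft_correct (f : NF A) (t : NT A) : f.emb ⋁ t.emb ≃ (f.ft t).emb := by
  have h := eq_dual (tf_correct f.mir t.mir)
  rw [show sdual (f.mir.emb ⋀ t.mir.emb) = sdual f.mir.emb ⋁ sdual t.mir.emb from rfl,
    sdual_embT, sdual_embF, NF.mir_mir, NT.mir_mir, sdual_embF] at h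
  rw [NF.ft_eq_mir]
  exact h

theorem negT_correct (t : NT A) : ∼t.emb ≃ t.neg.emb :=
  ((tabs_nt t).negchar).trans (tf_correct t .fls)

theorem negF_correct (f : NF A) : ∼f.emb ≃ f.neg.emb :=
  ((fabs_nf f).negchar).trans (ft_correct f .tru)

theorem lhead_neg (b : Bool) (a : A) : ∼(NS.lhead b a) ≃ NS.lhead (!b) a := by
  cases b
  · exact rfl'
  · exact EqFSCL.scl3 _

theorem negS_correct (s : NS A) : ∼s.emb ≃ s.neg.emb := by
  induction s with
  | lit b a p q =>
      show ∼((NS.lhead b a ⋀ p.emb) ⋁ q.emb) ≃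
        (NS.lhead (!b) a ⋀ q.neg.emb) ⋁ p.neg.emb
      calc ∼((NS.lhead b a ⋀ p.emb) ⋁ q.emb)
          ≃ ∼(NS.lhead b a ⋀ p.emb) ⋀ ∼q.emb := neg_or _ _
        _ ≃ (∼(NS.lhead b a) ⋁ ∼p.emb) ⋀ ∼q.emb := acl (neg_and _ _)
        _ ≃ (∼(NS.lhead b a) ⋁ (p.emb ⋀ fls)) ⋀ (q.emb ⋁ tru) :=
            ac (ocr (tabs_nt p).negchar) (fabs_nf q).negchar
        _ ≃ (∼(NS.lhead b a) ⋀ (q.emb ⋁ tru)) ⋁ ((p.emb ⋀ fls) ⋀ (q.emb ⋁ tru)) :=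
            dscl10 _ _ _
        _ ≃ (∼(NS.lhead b a) ⋀ (q.emb ⋁ tru)) ⋁ (p.emb ⋀ (fls ⋀ (q.emb ⋁ tru))) :=
            ocr (and_assoc _ _ _)
        _ ≃ (∼(NS.lhead b a) ⋀ (q.emb ⋁ tru)) ⋁ (p.emb ⋀ fls) := ocr (acr (F_and _))
        _ ≃ (NS.lhead (!b) a ⋀ q.neg.emb) ⋁ p.neg.emb := by
            refine oc (ac (lhead_neg b a) ?_) ?_
            · exact (fabs_nf q).negchar.symm.trans (negF_correct q)
            · exact (tabs_nt p).negchar.symm.trans (negT_correct p)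
  | and s t ihs iht =>
      exact (neg_and _ _).trans (oc ihs iht)
  | or s t ihs iht =>
      exact (neg_or _ _).trans (ac ihs iht)

theorem st_correct (s : NS A) (t : NT A) : s.emb ⋀ t.emb ≃ (s.st t).emb := by
  induction s with
  | lit b a p q =>
      show ((NS.lhead b a ⋀ p.emb) ⋁ q.emb) ⋀ t.emb ≃
        (NS.lhead b a ⋀ (p.na t).emb) ⋁ q.emb
      calc ((NS.lhead b a ⋀ p.emb) ⋁ q.emb) ⋀ t.emb
          ≃ ((NS.lhead b a ⋁ q.emb) ⋀ p.emb) ⋀ t.emb :=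
            acl (decomp ((tabs_nt p).or _) (fabs_nf q) _)
        _ ≃ (NS.lhead b a ⋁ q.emb) ⋀ (p.emb ⋀ t.emb) := and_assoc _ _ _
        _ ≃ (NS.lhead b a ⋁ q.emb) ⋀ (p.na t).emb := acr (na_correct _ _)
        _ ≃ (NS.lhead b a ⋀ (p.na t).emb) ⋁ q.emb :=
            (decomp ((tabs_nt (p.na t)).or _) (fabs_nf q) _).symm
  | and s u ihs ihu =>
      exact (and_assoc _ _ _).trans (acr ihu)
  | or s u ihs ihu =>
      exact (and_t_distrib (tabs_nt t) _ _).trans (oc ihs ihu)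

theorem sim_correct (s : NS A) :
    ∀ (x : STerm A) (f g : NF A), x ⋀ f.emb ≃ g.emb →
      (s.emb ⋁ x) ⋀ f.emb ≃ (s.sim f g).emb := by
  induction s with
  | lit b a p q =>
      intro x f g hx
      have hinner : (q.emb ⋁ x) ⋀ f.emb ≃ (q.fo g).emb := by
        calc (q.emb ⋁ x) ⋀ f.emb ≃ (q.emb ⋁ (x ⋀ f.emb)) ⋀ f.emb := w (fabs_nf f) _ _
          _ ≃ (q.emb ⋁ g.emb) ⋀ f.emb := acl (ocr hx)
          _ ≃ (q.fo g).emb ⋀ f.emb := acl (fo_correct _ _)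
          _ ≃ (q.fo g).emb := (fabs_nf _).and _
      have main : (((NS.lhead b a ⋀ p.emb) ⋁ q.emb) ⋁ x) ⋀ f.emb ≃
          (NS.lhead b a ⋁ (q.fo g).emb) ⋀ (p.tf f).emb := by
        calc (((NS.lhead b a ⋀ p.emb) ⋁ q.emb) ⋁ x) ⋀ f.emb
            ≃ ((NS.lhead b a ⋀ p.emb) ⋁ (q.emb ⋁ x)) ⋀ f.emb := acl (or_assoc _ _ _)
          _ ≃ ((NS.lhead b a ⋀ p.emb) ⋁ ((q.emb ⋁ x) ⋀ f.emb)) ⋀ f.emb := w (fabs_nf f) _ _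
          _ ≃ ((NS.lhead b a ⋀ p.emb) ⋁ (q.fo g).emb) ⋀ f.emb := acl (ocr hinner)
          _ ≃ ((NS.lhead b a ⋁ (q.fo g).emb) ⋀ p.emb) ⋀ f.emb :=
              acl (decomp ((tabs_nt p).or _) (fabs_nf _) _)
          _ ≃ (NS.lhead b a ⋁ (q.fo g).emb) ⋀ (p.emb ⋀ f.emb) := and_assoc _ _ _
          _ ≃ (NS.lhead b a ⋁ (q.fo g).emb) ⋀ (p.tf f).emb := acr (tf_correct _ _)
      cases b
      · exact main
      · exact main.trans (gsw (fabs_nf (q.fo g)) (fabs_nf (p.tf f)) _)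
  | and s t ihs iht =>
      intro x f g hx
      calc ((s.emb ⋀ t.emb) ⋁ x) ⋀ f.emb
          ≃ ((s.emb ⋀ t.emb) ⋁ (x ⋀ f.emb)) ⋀ f.emb := w (fabs_nf f) _ _
        _ ≃ ((s.emb ⋀ t.emb) ⋁ g.emb) ⋀ f.emb := acl (ocr hx)
        _ ≃ ((s.emb ⋁ g.emb) ⋀ (t.emb ⋁ g.emb)) ⋀ f.emb := acl (or_f_distrib (fabs_nf g) _ _)
        _ ≃ (s.emb ⋁ g.emb) ⋀ ((t.emb ⋁ g.emb) ⋀ f.emb) := and_assoc _ _ _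
        _ ≃ (s.emb ⋁ g.emb) ⋀ (t.sim f g).emb := acr (iht _ _ _ ((fabs_nf g).and _))
        _ ≃ (s.sim (t.sim f g) g).emb := ihs _ _ _ ((fabs_nf g).and _)
  | or s t ihs iht =>
      intro x f g hx
      calc ((s.emb ⋁ t.emb) ⋁ x) ⋀ f.emb
          ≃ (s.emb ⋁ (t.emb ⋁ x)) ⋀ f.emb := acl (or_assoc _ _ _)
        _ ≃ (s.sim f (t.sim f g)).emb := ihs _ _ _ (iht _ _ _ hx)

theorem sf_correct (s : NS A) (f : NF A) : s.emb ⋀ f.emb ≃ (s.sf f).emb := by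
  have h : (fls : STerm A) ⋀ f.emb ≃ (NF.fls : NF A).emb := F_and _
  calc s.emb ⋀ f.emb ≃ (s.emb ⋁ fls) ⋀ f.emb := acl (or_F _).symm
    _ ≃ (s.sim f .fls).emb := sim_correct s _ _ _ h

theorem ss_correct (t : NS A) : ∀ x : NS A, x.emb ⋀ t.emb ≃ (x.ss t).emb := by
  induction t with
  | lit b a p q => intro x; exact rfl'
  | and s u ihs ihu =>
      intro x
      calc x.emb ⋀ (s.emb ⋀ u.emb) ≃ (x.emb ⋀ s.emb) ⋀ u.emb := (and_assoc _ _ _).symm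
        _ ≃ (x.ss s).emb ⋀ u.emb := acl (ihs x)
        _ ≃ ((x.ss s).ss u).emb := ihu _
  | or s u ihs ihu => intro x; exact rfl'

theorem nnneg_correct (n : NN A) : ∼n.emb ≃ n.neg.emb := by
  cases n with
  | t p => exact negT_correct p
  | f q => exact negF_correct q
  | ts p s =>
      show ∼(p.emb ⋀ s.emb) ≃ p.emb ⋀ s.neg.emb
      calc ∼(p.emb ⋀ s.emb) ≃ ∼p.emb ⋁ ∼s.emb := neg_and _ _
        _ ≃ (p.emb ⋀ fls) ⋁ ∼s.emb := ocl (tabs_nt p).negchar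
        _ ≃ (p.emb ⋁ tru) ⋀ ∼s.emb := EqFSCL.scl9 _ _
        _ ≃ p.emb ⋀ ∼s.emb := acl (tabs_nt p)
        _ ≃ p.emb ⋀ s.neg.emb := acr (negS_correct s)

theorem nnand_correct (m n : NN A) : m.emb ⋀ n.emb ≃ (m.and n).emb := by
  cases m with
  | f p => exact (fabs_nf p).and _
  | t p =>
      cases n with
      | t q => exact na_correct p q
      | f q => exact tf_correct p q
      | ts q s =>
          show p.emb ⋀ (q.emb ⋀ s.emb) ≃ (p.na q).emb ⋀ s.emb
          exact ((and_assoc _ _ _).symm).trans (acl (na_correct p q))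
  | ts p s =>
      cases n with
      | t q =>
          show (p.emb ⋀ s.emb) ⋀ q.emb ≃ p.emb ⋀ (s.st q).emb
          exact (and_assoc _ _ _).trans (acr (st_correct s q))
      | f q =>
          show (p.emb ⋀ s.emb) ⋀ q.emb ≃ (p.tf (s.sf q)).emb
          calc (p.emb ⋀ s.emb) ⋀ q.emb ≃ p.emb ⋀ (s.emb ⋀ q.emb) := and_assoc _ _ _
            _ ≃ p.emb ⋀ (s.sf q).emb := acr (sf_correct s q)
            _ ≃ (p.tf (s.sf q)).emb := tf_correct _ _
      | ts q s' =>
          show (p.emb ⋀ s.emb) ⋀ (q.emb ⋀ s'.emb) ≃ p.emb ⋀ ((s.st q).ss s').emb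
          calc (p.emb ⋀ s.emb) ⋀ (q.emb ⋀ s'.emb)
              ≃ p.emb ⋀ (s.emb ⋀ (q.emb ⋀ s'.emb)) := and_assoc _ _ _
            _ ≃ p.emb ⋀ ((s.emb ⋀ q.emb) ⋀ s'.emb) := acr (and_assoc _ _ _).symm
            _ ≃ p.emb ⋀ ((s.st q).emb ⋀ s'.emb) := acr (acl (st_correct s q))
            _ ≃ p.emb ⋀ ((s.st q).ss s').emb := acr (ss_correct s' _)

theorem nf_correct (P : STerm A) : P ≃ (nf P).emb := by
  induction P with
  | atom a =>
      show STerm.atom a ≃ tru ⋀ ((STerm.atom a ⋀ tru) ⋁ fls)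
      refine EqFSCL.symm ?_
      calc tru ⋀ ((STerm.atom a ⋀ tru) ⋁ fls) ≃ (STerm.atom a ⋀ tru) ⋁ fls := T_and _
        _ ≃ STerm.atom a ⋀ tru := or_F _
        _ ≃ STerm.atom a := and_T _
  | tru => exact rfl'
  | fls => exact rfl'
  | neg p ih => exact (nc ih).trans (nnneg_correct _)
  | and p q ihp ihq => exact (ac ihp ihq).trans (nnand_correct _ _)
  | or p q ihp ihq =>
      calc p ⋁ q ≃ ∼(∼p ⋀ ∼q) := EqFSCL.scl2 _ _
        _ ≃ ∼(∼(nf p).emb ⋀ ∼(nf q).emb) := nc (ac (nc ihp) (nc ihq))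
        _ ≃ ∼((nf p).neg.emb ⋀ (nf q).neg.emb) := nc (ac (nnneg_correct _) (nnneg_correct _))
        _ ≃ ∼((nf p).neg.and (nf q).neg).emb := nc (nnand_correct _ _)
        _ ≃ (((nf p).neg.and (nf q).neg)).neg.emb := nnneg_correct _

end Eq0
end SCLComplete
namespace SCLComplete
variable {A : Type}

/-! ### Well-formedness preservation -/

theorem NS.isD_st {s : NS A} (h : s.isD) (t : NT A) : (s.st t).isD := by
  cases s <;> simp_all [NS.isD, NS.st]

theorem NS.isC_st {s : NS A} (h : s.isC) (t : NT A) : (s.st t).isC := by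
  cases s <;> simp_all [NS.isC, NS.st]

theorem NS.wf_st {s : NS A} (h : s.wf) (t : NT A) : (s.st t).wf := by
  induction s with
  | lit b a p q => trivial
  | and s u ihs ihu =>
      obtain ⟨hs, hu, hd⟩ := h
      exact ⟨hs, ihu hu, NS.isD_st hd t⟩
  | or s u ihs ihu =>
      obtain ⟨hs, hu, hc⟩ := h
      exact ⟨ihs hs, ihu hu, NS.isC_st hc t⟩

theorem NS.isD_neg {s : NS A} (h : s.isC) : s.neg.isD := by
  cases s <;> simp_all [NS.isC, NS.isD, NS.neg]

theorem NS.isC_neg {s : NS A} (h : s.isD) : s.neg.isC := by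
  cases s <;> simp_all [NS.isC, NS.isD, NS.neg]

theorem NS.wf_neg {s : NS A} (h : s.wf) : s.neg.wf := by
  induction s with
  | lit b a p q => trivial
  | and s u ihs ihu =>
      obtain ⟨hs, hu, hd⟩ := h
      exact ⟨ihs hs, ihu hu, NS.isC_neg hd⟩
  | or s u ihs ihu =>
      obtain ⟨hs, hu, hc⟩ := h
      exact ⟨ihs hs, ihu hu, NS.isD_neg hc⟩

theorem NS.wf_ss {t : NS A} (ht : t.wf) : ∀ x : NS A, x.wf → (x.ss t).wf := by
  induction t with
  | lit b a p q => exact fun x hx => ⟨hx, trivial, trivial⟩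
  | and s u ihs ihu =>
      intro x hx
      obtain ⟨hs, hu, hd⟩ := ht
      exact ihu hu _ (ihs hs x hx)
  | or s u ihs ihu =>
      intro x hx
      exact ⟨hx, ht, trivial⟩

theorem NN.wf_neg {n : NN A} (h : n.wf) : n.neg.wf := by
  cases n with
  | t p => trivial
  | f q => trivial
  | ts p s => exact NS.wf_neg h

theorem NN.wf_and {m n : NN A} (hm : m.wf) (hn : n.wf) : (m.and n).wf := by
  cases m with
  | f p => trivial
  | t p => cases n with
    | t q => trivial
    | f q => trivial
    | ts q s => exact hn
  | ts p s =>
      cases n with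
      | t q => exact NS.wf_st hm q
      | f q => trivial
      | ts q s' => exact NS.wf_ss hn _ (NS.wf_st hm q)

theorem wf_nf (P : STerm A) : (nf P).wf := by
  induction P with
  | atom a => trivial
  | tru => trivial
  | fls => trivial
  | neg p ih => exact NN.wf_neg ih
  | and p q ihp ihq => exact NN.wf_and ihp ihq
  | or p q ihp ihq => exact NN.wf_neg (NN.wf_and (NN.wf_neg ihp) (NN.wf_neg ihq))

end SCLComplete
namespace SCLComplete
variable {A : Type}

open ETree

/-! ### Tree infrastructure -/

/-- `Tg X Z = X[T ↦ Z]`. -/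
def Tg (X Z : ETree A) : ETree A := X.subst Z .fls
/-- `Fg X Z = X[F ↦ Z]`. -/
def Fg (X Z : ETree A) : ETree A := X.subst .tru Z
/-- leaf swap. -/
def sw (X : ETree A) : ETree A := X.subst .fls .tru

theorem subst_comp (X Y Z U V : ETree A) :
    (X.subst Y Z).subst U V = X.subst (Y.subst U V) (Z.subst U V) := by
  induction X with
  | tru => rfl
  | fls => rfl
  | node l a r ihl ihr => simp [ETree.subst, ihl, ihr]

theorem subst_id (X : ETree A) : X.subst .tru .fls = X := by
  induction X with
  | tru => rfl
  | fls => rfl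
  | node l a r ihl ihr => simp [ETree.subst, ihl, ihr]

@[simp] theorem Tg_tru (Z : ETree A) : Tg .tru Z = Z := rfl
@[simp] theorem Tg_fls (Z : ETree A) : Tg .fls Z = .fls := rfl
@[simp] theorem Tg_node (l r Z : ETree A) (a : A) :
    Tg (.node l a r) Z = .node (Tg l Z) a (Tg r Z) := rfl
@[simp] theorem Fg_tru (Z : ETree A) : Fg .tru Z = .tru := rfl
@[simp] theorem Fg_fls (Z : ETree A) : Fg .fls Z = Z := rfl
@[simp] theorem Fg_node (l r Z : ETree A) (a : A) :
    Fg (.node l a r) Z = .node (Fg l Z) a (Fg r Z) := rfl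
@[simp] theorem sw_tru : sw (.tru : ETree A) = .fls := rfl
@[simp] theorem sw_fls : sw (.fls : ETree A) = .tru := rfl
@[simp] theorem sw_node (l r : ETree A) (a : A) :
    sw (.node l a r) = .node (sw l) a (sw r) := rfl

@[simp] theorem hasTru_Tg {X Z : ETree A} :
    (Tg X Z).hasTru ↔ X.hasTru ∧ Z.hasTru := by
  induction X with
  | tru => simp [Tg, ETree.subst, ETree.hasTru]
  | fls => simp [Tg, ETree.subst, ETree.hasTru]
  | node l a r ihl ihr =>
      simp only [Tg, ETree.subst, ETree.hasTru] at *
      rw [ihl, ihr]; tauto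

@[simp] theorem hasFls_Tg {X Z : ETree A} :
    (Tg X Z).hasFls ↔ X.hasFls ∨ (X.hasTru ∧ Z.hasFls) := by
  induction X with
  | tru => simp [Tg, ETree.subst, ETree.hasFls, ETree.hasTru]
  | fls => simp [Tg, ETree.subst, ETree.hasFls, ETree.hasTru]
  | node l a r ihl ihr =>
      simp only [Tg, ETree.subst, ETree.hasFls, ETree.hasTru] at *
      rw [ihl, ihr]; tauto

@[simp] theorem hasTru_Fg {X Z : ETree A} :
    (Fg X Z).hasTru ↔ X.hasTru ∨ (X.hasFls ∧ Z.hasTru) := by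
  induction X with
  | tru => simp [Fg, ETree.subst, ETree.hasFls, ETree.hasTru]
  | fls => simp [Fg, ETree.subst, ETree.hasFls, ETree.hasTru]
  | node l a r ihl ihr =>
      simp only [Fg, ETree.subst, ETree.hasFls, ETree.hasTru] at *
      rw [ihl, ihr]; tauto

@[simp] theorem hasFls_Fg {X Z : ETree A} :
    (Fg X Z).hasFls ↔ X.hasFls ∧ Z.hasFls := by
  induction X with
  | tru => simp [Fg, ETree.subst, ETree.hasFls]
  | fls => simp [Fg, ETree.subst, ETree.hasFls]
  | node l a r ihl ihr =>
      simp only [Fg, ETree.subst, ETree.hasFls] at *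
      rw [ihl, ihr]; tauto

theorem Tg_of_noTru {X : ETree A} (h : ¬ X.hasTru) (Z : ETree A) : Tg X Z = X := by
  induction X with
  | tru => exact absurd trivial h
  | fls => rfl
  | node l a r ihl ihr =>
      have : ¬ l.hasTru ∧ ¬ r.hasTru := by
        constructor <;> intro hh <;> exact h (by first | exact Or.inl hh | exact Or.inr hh)
      simp [ihl this.1, ihr this.2]

theorem Fg_of_noFls {X : ETree A} (h : ¬ X.hasFls) (Z : ETree A) : Fg X Z = X := by
  induction X with
  | tru => rfl
  | fls => exact absurd trivial h
  | node l a r ihl ihr =>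
      have : ¬ l.hasFls ∧ ¬ r.hasFls := by
        constructor <;> intro hh <;> exact h (by first | exact Or.inl hh | exact Or.inr hh)
      simp [ihl this.1, ihr this.2]

theorem sw_sw (X : ETree A) : sw (sw X) = X := by
  show (X.subst .fls .tru).subst .fls .tru = X
  rw [subst_comp]; exact subst_id X

theorem sw_inj {X Y : ETree A} (h : sw X = sw Y) : X = Y := by
  rw [← sw_sw X, h, sw_sw]

theorem sw_Tg (X Z : ETree A) : sw (Tg X Z) = Fg (sw X) (sw Z) := by
  show (X.subst Z .fls).subst .fls .tru = (X.subst .fls .tru).subst .tru (Z.subst .fls .tru)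
  rw [subst_comp, subst_comp]; rfl

theorem sw_Fg (X Z : ETree A) : sw (Fg X Z) = Tg (sw X) (sw Z) := by
  show (X.subst .tru Z).subst .fls .tru = (X.subst .fls .tru).subst (Z.subst .fls .tru) .fls
  rw [subst_comp, subst_comp]; rfl

@[simp] theorem hasTru_sw {X : ETree A} : (sw X).hasTru ↔ X.hasFls := by
  induction X with
  | tru => simp [ETree.hasTru, ETree.hasFls]
  | fls => simp [ETree.hasTru, ETree.hasFls]
  | node l a r ihl ihr =>
      show (sw l).hasTru ∨ (sw r).hasTru ↔ _
      rw [ihl, ihr]; rfl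

@[simp] theorem hasFls_sw {X : ETree A} : (sw X).hasFls ↔ X.hasTru := by
  induction X with
  | tru => simp [ETree.hasTru, ETree.hasFls]
  | fls => simp [ETree.hasTru, ETree.hasFls]
  | node l a r ihl ihr =>
      show (sw l).hasFls ∨ (sw r).hasFls ↔ _
      rw [ihl, ihr]; rfl

theorem tru_or_fls (X : ETree A) : X.hasTru ∨ X.hasFls := by
  induction X with
  | tru => exact Or.inl trivial
  | fls => exact Or.inr trivial
  | node l a r ihl ihr =>
      rcases ihl with h | h
      · exact Or.inl (Or.inl h)
      · exact Or.inr (Or.inl h)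

theorem node_of_TF {X : ETree A} (h1 : X.hasTru) (h2 : X.hasFls) :
    ∃ l a r, X = .node l a r := by
  cases X with
  | tru => exact absurd h2 (by simp [ETree.hasFls])
  | fls => exact absurd h1 (by simp [ETree.hasTru])
  | node l a r => exact ⟨l, a, r, rfl⟩

/-! ### node count -/

def nodes : ETree A → ℕ
  | .tru => 0
  | .fls => 0
  | .node l _ r => nodes l + nodes r + 1

theorem nodes_le_Tg {X : ETree A} (h : X.hasTru) (Z : ETree A) :
    nodes Z ≤ nodes (Tg X Z) := by
  induction X with
  | tru => exact le_refl _
  | fls => exact absurd h (by simp [ETree.hasTru])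
  | node l a r ihl ihr =>
      rcases h with h | h
      · exact le_trans (ihl h) (by show _ ≤ nodes (Tg l Z) + nodes (Tg r Z) + 1; omega)
      · exact le_trans (ihr h) (by show _ ≤ nodes (Tg l Z) + nodes (Tg r Z) + 1; omega)

theorem nodes_lt_Tg {l r Z : ETree A} {a : A} (h : (ETree.node l a r).hasTru) :
    nodes Z < nodes (Tg (.node l a r) Z) := by
  show _ < nodes (ETree.node (Tg l Z) a (Tg r Z))
  show _ < nodes (Tg l Z) + nodes (Tg r Z) + 1
  rcases h with h | h
  · have := nodes_le_Tg h Z; omega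
  · have := nodes_le_Tg h Z; omega

theorem nodes_le_Fg {X : ETree A} (h : X.hasFls) (Z : ETree A) :
    nodes Z ≤ nodes (Fg X Z) := by
  induction X with
  | tru => exact absurd h (by simp [ETree.hasFls])
  | fls => exact le_refl _
  | node l a r ihl ihr =>
      rcases h with h | h
      · exact le_trans (ihl h) (by show _ ≤ nodes (Fg l Z) + nodes (Fg r Z) + 1; omega)
      · exact le_trans (ihr h) (by show _ ≤ nodes (Fg l Z) + nodes (Fg r Z) + 1; omega)

theorem nodes_lt_Fg {l r Z : ETree A} {a : A} (h : (ETree.node l a r).hasFls) :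
    nodes Z < nodes (Fg (.node l a r) Z) := by
  show _ < nodes (ETree.node (Fg l Z) a (Fg r Z))
  show _ < nodes (Fg l Z) + nodes (Fg r Z) + 1
  rcases h with h | h
  · have := nodes_le_Fg h Z; omega
  · have := nodes_le_Fg h Z; omega

/-! ### graft injectivity -/

theorem Tg_inj {Z : ETree A} (hZ : Z.hasTru) :
    ∀ {X X' : ETree A}, Tg X Z = Tg X' Z → X = X' := by
  intro X
  induction X with
  | tru =>
      intro X' h
      cases X' with
      | tru => rfl
      | fls => rw [Tg_tru, Tg_fls] at h; subst h; exact absurd hZ (by simp [ETree.hasTru])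
      | node l' a' r' =>
          exfalso
          rw [Tg_tru] at h
          by_cases hT : (ETree.node l' a' r').hasTru
          · have := nodes_lt_Tg (Z := Z) hT
            rw [← h] at this; omega
          · rw [Tg_of_noTru hT] at h
            rw [h] at hZ; exact hT hZ
  | fls =>
      intro X' h
      cases X' with
      | fls => rfl
      | tru => rw [Tg_tru, Tg_fls] at h; subst h; exact absurd hZ (by simp [ETree.hasTru])
      | node l' a' r' => rw [Tg_fls, Tg_node] at h; exact absurd h (by simp)
  | node l a r ihl ihr =>
      intro X' h
      cases X' with
      | tru =>
          exfalso
          rw [Tg_tru] at h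
          by_cases hT : (ETree.node l a r).hasTru
          · have := nodes_lt_Tg (Z := Z) hT
            rw [h] at this; omega
          · rw [Tg_of_noTru hT] at h
            rw [← h] at hZ; exact hT hZ
      | fls => rw [Tg_fls, Tg_node] at h; exact absurd h (by simp)
      | node l' a' r' =>
          rw [Tg_node, Tg_node] at h
          injection h with h1 h2 h3
          rw [ihl h1, h2, ihr h3]

theorem Fg_inj {Z : ETree A} (hZ : Z.hasFls) :
    ∀ {X X' : ETree A}, Fg X Z = Fg X' Z → X = X' := by
  intro X X' h
  apply sw_inj
  apply Tg_inj (Z := sw Z) (by simpa using hZ)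
  rw [← sw_Fg, ← sw_Fg, h]

end SCLComplete
namespace SCLComplete
variable {A : Type}
open ETree

/-! ### Positions -/

def subAt : ETree A → List Bool → Option (ETree A)
  | X, [] => some X
  | .node l _ r, b :: p => subAt (bif b then r else l) p
  | .tru, _ :: _ => none
  | .fls, _ :: _ => none

@[simp] theorem subAt_nil (X : ETree A) : subAt X [] = some X := by cases X <;> rfl
@[simp] theorem subAt_cons_node (l r : ETree A) (a : A) (b : Bool) (p : List Bool) :
    subAt (.node l a r) (b :: p) = subAt (bif b then r else l) p := rfl
@[simp] theorem subAt_cons_tru (b : Bool) (p : List Bool) :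
    subAt (.tru : ETree A) (b :: p) = none := rfl
@[simp] theorem subAt_cons_fls (b : Bool) (p : List Bool) :
    subAt (.fls : ETree A) (b :: p) = none := rfl

theorem subAt_append (X : ETree A) (u v : List Bool) :
    subAt X (u ++ v) = (subAt X u).bind (fun W => subAt W v) := by
  induction u generalizing X with
  | nil => simp
  | cons b u ih =>
      cases X with
      | tru => simp
      | fls => simp
      | node l a r => simpa using ih (bif b then r else l)

theorem subAt_prefix {X : ETree A} {p : List Bool} {W : ETree A}
    (h : subAt X p = some W) {u : List Bool} (hu : u <+: p) :
    ∃ R, subAt X u = some R := by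
  obtain ⟨v, rfl⟩ := hu
  rw [subAt_append] at h
  cases hR : subAt X u with
  | none => rw [hR] at h; simp at h
  | some R => exact ⟨R, rfl⟩

theorem subAt_trans {X R W : ETree A} {u v : List Bool}
    (h1 : subAt X u = some R) (h2 : subAt R v = some W) :
    subAt X (u ++ v) = some W := by
  rw [subAt_append, h1]; exact h2

theorem hasTru_of_subAt {X W : ETree A} {p : List Bool}
    (h : subAt X p = some W) (hW : W.hasTru) : X.hasTru := by
  induction p generalizing X with
  | nil => simp at h; subst h; exact hW
  | cons b p ih =>
      cases X with
      | tru => simp at h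
      | fls => simp at h
      | node l a r =>
          rw [subAt_cons_node] at h
          cases b
      
          · exact Or.inl (ih h)
          · exact Or.inr (ih h)

theorem hasFls_of_subAt {X W : ETree A} {p : List Bool}
    (h : subAt X p = some W) (hW : W.hasFls) : X.hasFls := by
  induction p generalizing X with
  | nil => simp at h; subst h; exact hW
  | cons b p ih =>
      cases X with
      | tru => simp at h
      | fls => simp at h
      | node l a r =>
          rw [subAt_cons_node] at h
          cases b
      
          · exact Or.inl (ih h)
          · exact Or.inr (ih h)

theorem exists_tru {X : ETree A} (h : X.hasTru) : ∃ p, subAt X p = some .tru := by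
  induction X with
  | tru => exact ⟨[], rfl⟩
  | fls => exact absurd h (by simp [ETree.hasTru])
  | node l a r ihl ihr =>
      rcases h with h | h
      · obtain ⟨p, hp⟩ := ihl h; exact ⟨false :: p, hp⟩
      · obtain ⟨p, hp⟩ := ihr h; exact ⟨true :: p, hp⟩

theorem exists_fls {X : ETree A} (h : X.hasFls) : ∃ p, subAt X p = some .fls := by
  induction X with
  | tru => exact absurd h (by simp [ETree.hasFls])
  | fls => exact ⟨[], rfl⟩
  | node l a r ihl ihr =>
      rcases h with h | h
      · obtain ⟨p, hp⟩ := ihl h; exact ⟨false :: p, hp⟩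
      · obtain ⟨p, hp⟩ := ihr h; exact ⟨true :: p, hp⟩

/-- a leaf has no proper descendants. -/
theorem leaf_prefix_eq {X : ETree A} {u p : List Bool} {L W : ETree A}
    (hu : subAt X u = some L) (hL : L = .tru ∨ L = .fls) (hup : u <+: p)
    (hp : subAt X p = some W) : p = u := by
  obtain ⟨v, rfl⟩ := hup
  rw [subAt_append, hu] at hp
  cases v with
  | nil => simp
  | cons b v => rcases hL with rfl | rfl <;> simp at hp

theorem nodes_subAt {X W : ETree A} {p : List Bool} (h : subAt X p = some W) :
    nodes W ≤ nodes X := by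
  induction p generalizing X with
  | nil => simp at h; subst h; exact le_refl _
  | cons b p ih =>
      cases X with
      | tru => simp at h
      | fls => simp at h
      | node l a r =>
          rw [subAt_cons_node] at h
          have := ih h
          show _ ≤ nodes l + nodes r + 1
          cases b <;> simp at this <;> omega

theorem nodes_subAt_lt {X W : ETree A} {b : Bool} {p : List Bool}
    (h : subAt X (b :: p) = some W) : nodes W < nodes X := by
  cases X with
  | tru => simp at h
  | fls => simp at h
  | node l a r =>
      rw [subAt_cons_node] at h
      have := nodes_subAt h
      show _ < nodes l + nodes r + 1
      cases b <;> simp at this <;> omega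

/-! ### positions and grafts -/

theorem Tg_subAt {X X' : ETree A} {u : List Bool} (h : subAt X u = some X') (Z : ETree A) :
    subAt (Tg X Z) u = some (Tg X' Z) := by
  induction u generalizing X with
  | nil => simp at h; subst h; exact subAt_nil _
  | cons b u ih =>
      cases X with
      | tru => simp at h
      | fls => simp at h
      | node l a r =>
          rw [subAt_cons_node] at h
          rw [Tg_node, subAt_cons_node]
          cases b
      
          · exact ih h
          · exact ih h

theorem Fg_subAt {X X' : ETree A} {u : List Bool} (h : subAt X u = some X') (Z : ETree A) :
    subAt (Fg X Z) u = some (Fg X' Z) := by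
  induction u generalizing X with
  | nil => simp at h; subst h; exact subAt_nil _
  | cons b u ih =>
      cases X with
      | tru => simp at h
      | fls => simp at h
      | node l a r =>
          rw [subAt_cons_node] at h
          rw [Fg_node, subAt_cons_node]
          cases b
      
          · exact ih h
          · exact ih h

theorem Tg_subAt_tru {X : ETree A} {u : List Bool} (h : subAt X u = some .tru)
    (Z : ETree A) : subAt (Tg X Z) u = some Z :=
  Tg_subAt h Z

theorem Fg_subAt_fls {X : ETree A} {u : List Bool} (h : subAt X u = some .fls)
    (Z : ETree A) : subAt (Fg X Z) u = some Z :=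
  Fg_subAt h Z

theorem Tg_factor {X Z W : ETree A} :
    ∀ {p : List Bool}, subAt (Tg X Z) p = some W →
      (∃ X', subAt X p = some X' ∧ W = Tg X' Z) ∨
      (∃ u v, p = u ++ v ∧ subAt X u = some .tru ∧ subAt Z v = some W) := by
  induction X with
  | tru =>
      intro p h
      exact Or.inr ⟨[], p, rfl, rfl, h⟩
  | fls =>
      intro p h
      cases p with
      | nil => simp at h; exact Or.inl ⟨.fls, rfl, h.symm⟩
      | cons b p => rw [Tg_fls] at h; simp at h
  | node l a r ihl ihr =>
      intro p h
      cases p with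
      | nil => simp at h; exact Or.inl ⟨_, rfl, h.symm⟩
      | cons b p =>
          rw [Tg_node, subAt_cons_node] at h
          cases b
      
          · rcases ihl (by simpa using h) with ⟨X', h1, h2⟩ | ⟨u, v, rfl, h1, h2⟩
            · exact Or.inl ⟨X', by simpa using h1, h2⟩
            · exact Or.inr ⟨false :: u, v, rfl, by simpa using h1, h2⟩
          · rcases ihr (by simpa using h) with ⟨X', h1, h2⟩ | ⟨u, v, rfl, h1, h2⟩
            · exact Or.inl ⟨X', by simpa using h1, h2⟩
            · exact Or.inr ⟨true :: u, v, rfl, by simpa using h1, h2⟩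

theorem Fg_factor {X Z W : ETree A} :
    ∀ {p : List Bool}, subAt (Fg X Z) p = some W →
      (∃ X', subAt X p = some X' ∧ W = Fg X' Z) ∨
      (∃ u v, p = u ++ v ∧ subAt X u = some .fls ∧ subAt Z v = some W) := by
  induction X with
  | fls =>
      intro p h
      exact Or.inr ⟨[], p, rfl, rfl, h⟩
  | tru =>
      intro p h
      cases p with
      | nil => simp at h; exact Or.inl ⟨.tru, rfl, h.symm⟩
      | cons b p => rw [Fg_tru] at h; simp at h
  | node l a r ihl ihr =>
      intro p h
      cases p with
      | nil => simp at h; exact Or.inl ⟨_, rfl, h.symm⟩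
      | cons b p =>
          rw [Fg_node, subAt_cons_node] at h
          cases b
      
          · rcases ihl (by simpa using h) with ⟨X', h1, h2⟩ | ⟨u, v, rfl, h1, h2⟩
            · exact Or.inl ⟨X', by simpa using h1, h2⟩
            · exact Or.inr ⟨false :: u, v, rfl, by simpa using h1, h2⟩
          · rcases ihr (by simpa using h) with ⟨X', h1, h2⟩ | ⟨u, v, rfl, h1, h2⟩
            · exact Or.inl ⟨X', by simpa using h1, h2⟩
            · exact Or.inr ⟨true :: u, v, rfl, by simpa using h1, h2⟩

theorem Tg_factor_tru {X Z : ETree A} {p : List Bool}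
    (h : subAt (Tg X Z) p = some .tru) :
    ∃ u v, p = u ++ v ∧ subAt X u = some .tru ∧ subAt Z v = some .tru := by
  rcases Tg_factor h with ⟨X', h1, h2⟩ | ⟨u, v, rfl, h1, h2⟩
  · cases X' with
    | tru => exact ⟨p, [], by simp, h1, by
        rw [subAt_nil]; exact congrArg some (show Z = ETree.tru from h2.symm)⟩
    | fls => exact absurd h2.symm (by simp)
    | node l a r => exact absurd h2.symm (by simp)
  · exact ⟨u, v, rfl, h1, h2⟩

theorem Tg_factor_fls {X Z : ETree A} {p : List Bool}
    (h : subAt (Tg X Z) p = some .fls) :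
    subAt X p = some .fls ∨
    ∃ u v, p = u ++ v ∧ subAt X u = some .tru ∧ subAt Z v = some .fls := by
  rcases Tg_factor h with ⟨X', h1, h2⟩ | ⟨u, v, rfl, h1, h2⟩
  · cases X' with
    | fls => exact Or.inl h1
    | tru => exact Or.inr ⟨p, [], by simp, h1, by
        rw [subAt_nil]; exact congrArg some (show Z = ETree.fls from h2.symm)⟩
    | node l a r => exact absurd h2.symm (by simp)
  · exact Or.inr ⟨u, v, rfl, h1, h2⟩

theorem Fg_factor_fls {X Z : ETree A} {p : List Bool}
    (h : subAt (Fg X Z) p = some .fls) :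
    ∃ u v, p = u ++ v ∧ subAt X u = some .fls ∧ subAt Z v = some .fls := by
  rcases Fg_factor h with ⟨X', h1, h2⟩ | ⟨u, v, rfl, h1, h2⟩
  · cases X' with
    | fls => exact ⟨p, [], by simp, h1, by
        rw [subAt_nil]; exact congrArg some (show Z = ETree.fls from h2.symm)⟩
    | tru => exact absurd h2.symm (by simp)
    | node l a r => exact absurd h2.symm (by simp)
  · exact ⟨u, v, rfl, h1, h2⟩

theorem Fg_factor_tru {X Z : ETree A} {p : List Bool}
    (h : subAt (Fg X Z) p = some .tru) :
    subAt X p = some .tru ∨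
    ∃ u v, p = u ++ v ∧ subAt X u = some .fls ∧ subAt Z v = some .tru := by
  rcases Fg_factor h with ⟨X', h1, h2⟩ | ⟨u, v, rfl, h1, h2⟩
  · cases X' with
    | tru => exact Or.inl h1
    | fls => exact Or.inr ⟨p, [], by simp, h1, by
        rw [subAt_nil]; exact congrArg some (show Z = ETree.tru from h2.symm)⟩
    | node l a r => exact absurd h2.symm (by simp)
  · exact Or.inr ⟨u, v, rfl, h1, h2⟩

/-- preservation of F-leaves under T-grafting. -/
theorem Tg_subAt_fls {X : ETree A} {u : List Bool} (h : subAt X u = some .fls)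
    (Z : ETree A) : subAt (Tg X Z) u = some .fls :=
  Tg_subAt h Z

theorem Fg_subAt_tru {X : ETree A} {u : List Bool} (h : subAt X u = some .tru)
    (Z : ETree A) : subAt (Fg X Z) u = some .tru :=
  Fg_subAt h Z

/-! ### cover decompositions -/

theorem cover_decomp_T {V : ETree A} :
    ∀ X : ETree A,
      (∀ p W, subAt X p = some W → (W = .tru ∨ W = .fls) →
        ∃ u, u <+: p ∧ subAt X u = some V) →
      ∃ U : ETree A, ¬ U.hasFls ∧ X = Tg U V := by
  intro X
  induction X with
  | tru =>
      intro hcov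
      by_cases hXV : (ETree.tru : ETree A) = V
      · exact ⟨.tru, by simp [ETree.hasFls], by rw [Tg_tru, hXV]⟩
      · obtain ⟨u, hu, hV⟩ := hcov [] .tru rfl (Or.inl rfl)
        rw [List.prefix_nil] at hu
        subst hu
        simp at hV
        exact absurd hV hXV
  | fls =>
      intro hcov
      by_cases hXV : (ETree.fls : ETree A) = V
      · exact ⟨.tru, by simp [ETree.hasFls], by rw [Tg_tru, hXV]⟩
      · obtain ⟨u, hu, hV⟩ := hcov [] .fls rfl (Or.inr rfl)
        rw [List.prefix_nil] at hu
        subst hu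
        simp at hV
        exact absurd hV hXV
  | node l a r ihl ihr =>
      intro hcov
      by_cases hXV : ETree.node l a r = V
      · exact ⟨.tru, by simp [ETree.hasFls], by rw [Tg_tru, hXV]⟩
      · have hcl : ∀ p W, subAt l p = some W → (W = .tru ∨ W = .fls) →
            ∃ u, u <+: p ∧ subAt l u = some V := by
          intro p W hp hW
          obtain ⟨u, hu, hV⟩ := hcov (false :: p) W (by simpa using hp) hW
          cases u with
          | nil => simp at hV; exact absurd hV hXV
          | cons b u =>
              obtain ⟨v, hv⟩ := hu
              simp at hv
              obtain ⟨rfl, hv⟩ := hv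
              exact ⟨u, ⟨v, hv⟩, by simpa using hV⟩
        have hcr : ∀ p W, subAt r p = some W → (W = .tru ∨ W = .fls) →
            ∃ u, u <+: p ∧ subAt r u = some V := by
          intro p W hp hW
          obtain ⟨u, hu, hV⟩ := hcov (true :: p) W (by simpa using hp) hW
          cases u with
          | nil => simp at hV; exact absurd hV hXV
          | cons b u =>
              obtain ⟨v, hv⟩ := hu
              simp at hv
              obtain ⟨rfl, hv⟩ := hv
              exact ⟨u, ⟨v, hv⟩, by simpa using hV⟩
        obtain ⟨Ul, hUl, hl⟩ := ihl hcl
        obtain ⟨Ur, hUr, hr⟩ := ihr hcr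
        refine ⟨.node Ul a Ur, ?_, ?_⟩
        · intro h
          rcases h with h | h
          · exact hUl h
          · exact hUr h
        · rw [Tg_node, ← hl, ← hr]

theorem subAt_sw (X : ETree A) (p : List Bool) :
    subAt (sw X) p = (subAt X p).map sw := by
  induction p generalizing X with
  | nil => simp
  | cons b p ih =>
      cases X with
      | tru => rfl
      | fls => rfl
      | node l a r =>
          rw [sw_node, subAt_cons_node, subAt_cons_node]
          cases b
  
          · exact ih l
          · exact ih r

theorem cover_decomp_F {V : ETree A} :
    ∀ X : ETree A,
      (∀ p W, subAt X p = some W → (W = .tru ∨ W = .fls) →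
        ∃ u, u <+: p ∧ subAt X u = some V) →
      ∃ U : ETree A, ¬ U.hasTru ∧ X = Fg U V := by
  intro X hcov
  have hsw : ∀ p W, subAt (sw X) p = some W → (W = .tru ∨ W = .fls) →
      ∃ u, u <+: p ∧ subAt (sw X) u = some (sw V) := by
    intro p W hp hW
    rw [subAt_sw] at hp
    cases hp0 : subAt X p with
    | none => rw [hp0] at hp; simp at hp
    | some W0 =>
        rw [hp0] at hp
        simp at hp
        have hW0 : W0 = .tru ∨ W0 = .fls := by
          rcases hW with rfl | rfl
          · right
            cases W0 with
            | tru => exact absurd hp.symm (by simp)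
            | fls => rfl
            | node l a r => exact absurd hp.symm (by simp)
          · left
            cases W0 with
            | tru => rfl
            | fls => exact absurd hp.symm (by simp)
            | node l a r => exact absurd hp.symm (by simp)
        obtain ⟨u, hu, hV⟩ := hcov p W0 hp0 hW0
        refine ⟨u, hu, ?_⟩
        rw [subAt_sw, hV]
        rfl
  obtain ⟨U, hU, hX⟩ := cover_decomp_T (sw X) hsw
  refine ⟨sw U, by simpa using hU, ?_⟩
  have := congrArg sw hX
  rw [sw_sw, sw_Tg, sw_sw] at this
  exact this

end SCLComplete
namespace SCLComplete
variable {A : Type}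
open ETree

/-! ### Trees of normal forms -/

def NT.tt : NT A → ETree A
  | .tru => .tru
  | .node a p q => .node p.tt a q.tt

def NF.ff : NF A → ETree A
  | .fls => .fls
  | .node a u v => .node v.ff a u.ff

def NS.tr : NS A → ETree A
  | .lit false a p q => .node p.tt a q.ff
  | .lit true a p q => .node q.ff a p.tt
  | .and s t => Tg s.tr t.tr
  | .or s t => Fg s.tr t.tr

def NN.tr : NN A → ETree A
  | .t p => p.tt
  | .f q => q.ff
  | .ts p s => Tg p.tt s.tr

theorem NT.tt_hasTru (t : NT A) : t.tt.hasTru := by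
  induction t with
  | tru => trivial
  | node a p q ihp ihq => exact Or.inl ihp

theorem NT.tt_noFls (t : NT A) : ¬ t.tt.hasFls := by
  induction t with
  | tru => simp [NT.tt, ETree.hasFls]
  | node a p q ihp ihq =>
      intro h
      rcases h with h | h
      · exact ihp h
      · exact ihq h

theorem NF.ff_hasFls (f : NF A) : f.ff.hasFls := by
  induction f with
  | fls => trivial
  | node a u v ihu ihv => exact Or.inl ihv

theorem NF.ff_noTru (f : NF A) : ¬ f.ff.hasTru := by
  induction f with
  | fls => simp [NF.ff, ETree.hasTru]
  | node a u v ihu ihv =>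
      intro h
      rcases h with h | h
      · exact ihv h
      · exact ihu h

theorem NT.tt_inj : ∀ {p q : NT A}, p.tt = q.tt → p = q := by
  intro p
  induction p with
  | tru =>
      intro q h
      cases q with
      | tru => rfl
      | node a u v => exact absurd h (by simp [NT.tt])
  | node a p1 p2 ih1 ih2 =>
      intro q h
      cases q with
      | tru => exact absurd h (by simp [NT.tt])
      | node a' u v =>
          simp only [NT.tt, ETree.node.injEq] at h
          obtain ⟨h1, h2, h3⟩ := h
          rw [h2, ih1 h1, ih2 h3]

theorem NF.ff_inj : ∀ {p q : NF A}, p.ff = q.ff → p = q := by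
  intro p
  induction p with
  | fls =>
      intro q h
      cases q with
      | fls => rfl
      | node a u v => exact absurd h (by simp [NF.ff])
  | node a p1 p2 ih1 ih2 =>
      intro q h
      cases q with
      | fls => exact absurd h (by simp [NF.ff])
      | node a' u v =>
          simp only [NF.ff, ETree.node.injEq] at h
          obtain ⟨h1, h2, h3⟩ := h
          rw [h2, ih2 h1, ih1 h3]

/-! ### se of embeddings -/

theorem se_and (x y : STerm A) : se (x.and y) = Tg (se x) (se y) := rfl
theorem se_or (x y : STerm A) : se (x.or y) = Fg (se x) (se y) := rfl
theorem se_neg (x : STerm A) : se x.neg = sw (se x) := rfl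

theorem se_embT (t : NT A) : se t.emb = t.tt := by
  induction t with
  | tru => rfl
  | node a p q ihp ihq =>
      show Fg (Tg (se (STerm.atom a)) (se p.emb)) (se q.emb) = _
      rw [ihp, ihq]
      show Fg (Tg (.node .tru a .fls) p.tt) q.tt = _
      rw [Tg_node, Tg_tru, Tg_fls, Fg_node, Fg_fls, Fg_of_noFls (NT.tt_noFls p)]
      rfl

theorem se_embF (f : NF A) : se f.emb = f.ff := by
  induction f with
  | fls => rfl
  | node a u v ihu ihv =>
      show Tg (Fg (se (STerm.atom a)) (se u.emb)) (se v.emb) = _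
      rw [ihu, ihv]
      show Tg (Fg (.node .tru a .fls) u.ff) v.ff = _
      rw [Fg_node, Fg_tru, Fg_fls, Tg_node, Tg_tru, Tg_of_noTru (NF.ff_noTru u)]
      rfl

theorem se_embS (s : NS A) : se s.emb = s.tr := by
  induction s with
  | lit b a p q =>
      cases b
      · show Fg (Tg (se (STerm.atom a)) (se p.emb)) (se q.emb) = _
        rw [se_embT, se_embF]
        show Fg (Tg (.node .tru a .fls) p.tt) q.ff = _
        rw [Tg_node, Tg_tru, Tg_fls, Fg_node, Fg_fls, Fg_of_noFls (NT.tt_noFls p)]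
        rfl
      · show Fg (Tg (sw (se (STerm.atom a))) (se p.emb)) (se q.emb) = _
        rw [se_embT, se_embF]
        show Fg (Tg (.node .fls a .tru) p.tt) q.ff = _
        rw [Tg_node, Tg_tru, Tg_fls, Fg_node, Fg_fls, Fg_of_noFls (NT.tt_noFls p)]
        rfl
  | and s t ihs iht =>
      show Tg (se s.emb) (se t.emb) = _
      rw [ihs, iht]; rfl
  | or s t ihs iht =>
      show Fg (se s.emb) (se t.emb) = _
      rw [ihs, iht]; rfl

theorem se_embN (n : NN A) : se n.emb = n.tr := by
  cases n with
  | t p => exact se_embT p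
  | f q => exact se_embF q
  | ts p s =>
      show Tg (se p.emb) (se s.emb) = _
      rw [se_embT, se_embS]; rfl

/-! ### star tree facts -/

theorem star_hasTru (s : NS A) : s.tr.hasTru := by
  induction s with
  | lit b a p q =>
      cases b
      · exact Or.inl (NT.tt_hasTru p)
      · exact Or.inr (NT.tt_hasTru p)
  | and s t ihs iht => exact hasTru_Tg.mpr ⟨ihs, iht⟩
  | or s t ihs iht => exact hasTru_Fg.mpr (Or.inl ihs)

theorem star_hasFls (s : NS A) : s.tr.hasFls := by
  induction s with
  | lit b a p q =>
      cases b
      · exact Or.inr (NF.ff_hasFls q)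
      · exact Or.inl (NF.ff_hasFls q)
  | and s t ihs iht => exact hasFls_Tg.mpr (Or.inl ihs)
  | or s t ihs iht => exact hasFls_Fg.mpr ⟨ihs, iht⟩

theorem star_node (s : NS A) : ∃ l a r, s.tr = .node l a r := by
  rcases node_of_TF (star_hasTru s) (star_hasFls s) with ⟨l, a, r, h⟩
  exact ⟨l, a, r, h⟩

/-! ### negation trees -/

theorem noFls_Tg_fls {X : ETree A} (h : ¬ X.hasFls) : Tg X .fls = sw X := by
  induction X with
  | tru => rfl
  | fls => exact absurd trivial h
  | node l a r ihl ihr =>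
      have hl : ¬ l.hasFls := fun hh => h (Or.inl hh)
      have hr : ¬ r.hasFls := fun hh => h (Or.inr hh)
      rw [Tg_node, sw_node, ihl hl, ihr hr]

theorem noTru_Fg_tru {X : ETree A} (h : ¬ X.hasTru) : Fg X .tru = sw X := by
  induction X with
  | tru => exact absurd trivial h
  | fls => rfl
  | node l a r ihl ihr =>
      have hl : ¬ l.hasTru := fun hh => h (Or.inl hh)
      have hr : ¬ r.hasTru := fun hh => h (Or.inr hh)
      rw [Fg_node, sw_node, ihl hl, ihr hr]

theorem ff_tf (t : NT A) (f : NF A) : (t.tf f).ff = Tg t.tt f.ff := by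
  induction t with
  | tru => rfl
  | node a p q ihp ihq =>
      show ETree.node (p.tf f).ff a (q.tf f).ff = _
      rw [ihp, ihq]; rfl

theorem tt_ft (f : NF A) (t : NT A) : (f.ft t).tt = Fg f.ff t.tt := by
  induction f with
  | fls => rfl
  | node a u v ihu ihv =>
      show ETree.node (v.ft t).tt a (u.ft t).tt = _
      rw [ihu, ihv]; rfl

theorem ff_negT (t : NT A) : t.neg.ff = sw t.tt := by
  show (t.tf .fls).ff = _
  rw [ff_tf]
  exact noFls_Tg_fls (NT.tt_noFls t)

theorem tt_negF (f : NF A) : f.neg.tt = sw f.ff := by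
  show (f.ft .tru).tt = _
  rw [tt_ft]
  exact noTru_Fg_tru (NF.ff_noTru f)

theorem tr_negS (s : NS A) : s.neg.tr = sw s.tr := by
  induction s with
  | lit b a p q =>
      cases b
      · show ETree.node p.neg.ff a q.neg.tt = _
        rw [ff_negT, tt_negF]; rfl
      · show ETree.node q.neg.tt a p.neg.ff = _
        rw [ff_negT, tt_negF]; rfl
  | and s t ihs iht =>
      show Fg s.neg.tr t.neg.tr = _
      rw [ihs, iht, ← sw_Tg]; rfl
  | or s t ihs iht =>
      show Tg s.neg.tr t.neg.tr = _
      rw [ihs, iht, ← sw_Fg]; rfl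

theorem size_negS (s : NS A) : s.neg.size = s.size := by
  induction s with
  | lit b a p q => rfl
  | and s t ihs iht => show s.neg.size + t.neg.size + 1 = _; rw [ihs, iht]; rfl
  | or s t ihs iht => show s.neg.size + t.neg.size + 1 = _; rw [ihs, iht]; rfl

theorem size_pos (s : NS A) : 1 ≤ s.size := by
  cases s with
  | lit b a p q => exact le_refl _
  | and s t => show 1 ≤ s.size + t.size + 1; omega
  | or s t => show 1 ≤ s.size + t.size + 1; omega

end SCLComplete
namespace SCLComplete
variable {A : Type}
open ETree

/-- Key lemma (G): a star tree has no nontrivial all-box decomposition. -/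
theorem gstar_aux : ∀ n : ℕ, ∀ s : NS A, s.size ≤ n → ∀ U V : ETree A,
    s.tr = Tg U V → ¬ U.hasFls → U = .tru := by
  intro n
  induction n with
  | zero =>
      intro s hs U V h1 h2
      have := size_pos s
      omega
  | succ n ih =>
      intro s hs U V hX hU
      cases s with
      | lit b a p q =>
          cases U with
          | tru => rfl
          | fls => exact absurd trivial hU
          | node U1 c U2 =>
              exfalso
              have hsT := star_hasTru (NS.lit b a p q)
              have hsF := star_hasFls (NS.lit b a p q)
              rw [hX] at hsT hsF
              have hVT : V.hasTru := (hasTru_Tg.mp hsT).2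
              have hVF : V.hasFls := ((hasFls_Tg.mp hsF).resolve_left hU).2
              have hU1T : U1.hasTru :=
                (tru_or_fls U1).resolve_right (fun h => hU (Or.inl h))
              cases b
              · have hX' : ETree.node p.tt a q.ff = Tg (ETree.node U1 c U2) V := hX
                rw [Tg_node] at hX'
                injection hX' with h1 h2 h3
                exact NT.tt_noFls p (by rw [h1]; exact hasFls_Tg.mpr (Or.inr ⟨hU1T, hVF⟩))
              · have hX' : ETree.node q.ff a p.tt = Tg (ETree.node U1 c U2) V := hX
                rw [Tg_node] at hX'
                injection hX' with h1 h2 h3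
                exact NF.ff_noTru q (by rw [h1]; exact hasTru_Tg.mpr ⟨hU1T, hVT⟩)
      | and s1 s2 =>
          cases U with
          | tru => rfl
          | fls => exact absurd trivial hU
          | node U1 c U2 =>
              exfalso
              have hX' : Tg s1.tr s2.tr = Tg (ETree.node U1 c U2) V := hX
              have hsT := star_hasTru (NS.and s1 s2)
              have hsF := star_hasFls (NS.and s1 s2)
              rw [hX] at hsT hsF
              have hVT : V.hasTru := (hasTru_Tg.mp hsT).2
              have hVF : V.hasFls := ((hasFls_Tg.mp hsF).resolve_left hU).2
              -- exposed F-leaf of s1.tr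
              obtain ⟨f0, hf0⟩ := exists_fls (star_hasFls s1)
              have hXf0 : subAt (Tg s1.tr s2.tr) f0 = some .fls := Tg_subAt_fls hf0 s2.tr
              rw [hX'] at hXf0
              rcases Tg_factor_fls hXf0 with hexp | ⟨u0, v0, hsplit, hu0, hv0⟩
              · exact hU (hasFls_of_subAt hexp trivial)
              obtain ⟨A1, hA1⟩ := subAt_prefix hf0 ⟨v0, hsplit.symm⟩
              have hXA1 : subAt (Tg s1.tr s2.tr) u0 = some (Tg A1 s2.tr) := Tg_subAt hA1 _
              have hXV : subAt (Tg (ETree.node U1 c U2) V) u0 = some V := Tg_subAt_tru hu0 V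
              rw [hX'] at hXA1
              have hVeq : V = Tg A1 s2.tr := by
                rw [hXA1] at hXV; exact (Option.some.inj hXV).symm
              have hA1F : A1.hasFls := by
                have hh : subAt s1.tr (u0 ++ v0) = some .fls := by rw [← hsplit]; exact hf0
                rw [subAt_append, hA1] at hh
                exact hasFls_of_subAt hh trivial
              have hA1T : A1.hasTru := (hasTru_Tg.mp (hVeq ▸ hVT)).1
              obtain ⟨l1, a1, r1, hA1node⟩ := node_of_TF hA1T hA1F
              have hBV : nodes s2.tr < nodes V := by
                rw [hVeq, hA1node]; exact nodes_lt_Tg (hA1node ▸ hA1T)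
              have hOcc : ∀ u, subAt (ETree.node U1 c U2) u = some .tru →
                  subAt s1.tr u = some A1 := by
                intro u hu
                have hXu : subAt (Tg (ETree.node U1 c U2) V) u = some V := Tg_subAt_tru hu V
                rw [← hX'] at hXu
                rcases Tg_factor hXu with ⟨A', hA', hVA'⟩ | ⟨τ, κ, hsp, hτ, hκ⟩
                · have hAA : A' = A1 := Tg_inj (star_hasTru s2) (by rw [← hVA', hVeq])
                  rw [← hAA]; exact hA'
                · exfalso; have := nodes_subAt hκ; omega
              have hCovHelp : ∀ (w : List Bool) (L : ETree A),
                  subAt (Tg (ETree.node U1 c U2) V) w = some L → (L = .tru ∨ L = .fls) →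
                  ∃ u, u <+: w ∧ subAt (ETree.node U1 c U2) u = some .tru := by
                intro w L hw hL
                rcases hL with rfl | rfl
                · obtain ⟨u, v, rfl, hu, hv⟩ := Tg_factor_tru hw
                  exact ⟨u, ⟨v, rfl⟩, hu⟩
                · rcases Tg_factor_fls hw with hexp | ⟨u, v, rfl, hu, hv⟩
                  · exact absurd (hasFls_of_subAt hexp trivial) hU
                  · exact ⟨u, ⟨v, rfl⟩, hu⟩
              have hCov : ∀ p W, subAt s1.tr p = some W → (W = .tru ∨ W = .fls) →
                  ∃ u, u <+: p ∧ subAt s1.tr u = some A1 := by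
                intro p W hp hW
                have hXp : subAt (Tg s1.tr s2.tr) p = some (Tg W s2.tr) := Tg_subAt hp _
                obtain ⟨β, L, hβ, hLleaf⟩ : ∃ (β : List Bool) (L : ETree A),
                    subAt (Tg W s2.tr) β = some L ∧ (L = ETree.tru ∨ L = ETree.fls) := by
                  rcases hW with rfl | rfl
                  · rcases tru_or_fls s2.tr with hB | hB
                    · obtain ⟨β, hβ⟩ := exists_tru hB
                      exact ⟨β, .tru, by rw [Tg_tru]; exact hβ, Or.inl rfl⟩
                    · obtain ⟨β, hβ⟩ := exists_fls hB
                      exact ⟨β, .fls, by rw [Tg_tru]; exact hβ, Or.inr rfl⟩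
                  · exact ⟨[], .fls, by rw [Tg_fls]; exact subAt_nil _, Or.inr rfl⟩
                have hXpβ : subAt (Tg s1.tr s2.tr) (p ++ β) = some L := subAt_trans hXp hβ
                rw [hX'] at hXpβ
                obtain ⟨u, hupre, hu⟩ := hCovHelp _ _ hXpβ hLleaf
                rcases List.prefix_or_prefix_of_prefix hupre (List.prefix_append p β)
                  with hup | hpu
                · exact ⟨u, hup, hOcc u hu⟩
                · exfalso
                  obtain ⟨κ, rfl⟩ := hpu
                  have h1 : subAt (Tg (ETree.node U1 c U2) V) (p ++ κ) = some V :=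
                    Tg_subAt_tru hu V
                  rw [← hX'] at h1
                  have h2 : some V = subAt (Tg W s2.tr) κ := by
                    rw [← h1, subAt_append, hXp]; rfl
                  rcases hW with rfl | rfl
                  · rw [Tg_tru] at h2
                    have := nodes_subAt h2.symm; omega
                  · rw [Tg_fls] at h2
                    cases κ with
                    | nil =>
                        rw [subAt_nil] at h2
                        have hVfls : V = .fls := Option.some.inj h2
                        rw [hVfls] at hVT
                        exact hVT
                    | cons b κ => rw [subAt_cons_fls] at h2; exact nomatch h2
              obtain ⟨U', hU'F, hAeq⟩ := cover_decomp_T s1.tr hCov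
              have hsz : s1.size ≤ n := by
                have h1 : s1.size + s2.size + 1 ≤ n + 1 := hs
                have := size_pos s2
                omega
              have hU'tru : U' = .tru := ih s1 hsz U' A1 hAeq hU'F
              rw [hU'tru, Tg_tru] at hAeq
              cases u0 with
              | nil =>
                  rw [subAt_nil] at hu0
                  exact nomatch hu0
              | cons b u0 =>
                  have := nodes_subAt_lt hA1
                  rw [hAeq] at this
                  omega
      | or s1 s2 =>
          cases U with
          | tru => rfl
          | fls => exact absurd trivial hU
          | node U1 c U2 =>
              exfalso
              have hX' : Fg s1.tr s2.tr = Tg (ETree.node U1 c U2) V := hX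
              have hsT := star_hasTru (NS.or s1 s2)
              have hsF := star_hasFls (NS.or s1 s2)
              rw [hX] at hsT hsF
              have hVT : V.hasTru := (hasTru_Tg.mp hsT).2
              have hVF : V.hasFls := ((hasFls_Tg.mp hsF).resolve_left hU).2
              -- exposed T-leaf of s1.tr
              obtain ⟨t0, ht0⟩ := exists_tru (star_hasTru s1)
              have hXt0 : subAt (Fg s1.tr s2.tr) t0 = some .tru := Fg_subAt_tru ht0 s2.tr
              rw [hX'] at hXt0
              obtain ⟨u0, v0, hsplit, hu0, hv0⟩ := Tg_factor_tru hXt0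
              obtain ⟨A1, hA1⟩ := subAt_prefix ht0 ⟨v0, hsplit.symm⟩
              have hXA1 : subAt (Fg s1.tr s2.tr) u0 = some (Fg A1 s2.tr) := Fg_subAt hA1 _
              have hXV : subAt (Tg (ETree.node U1 c U2) V) u0 = some V := Tg_subAt_tru hu0 V
              rw [hX'] at hXA1
              have hVeq : V = Fg A1 s2.tr := by
                rw [hXA1] at hXV; exact (Option.some.inj hXV).symm
              have hA1T : A1.hasTru := by
                have hh : subAt s1.tr (u0 ++ v0) = some .tru := by rw [← hsplit]; exact ht0
                rw [subAt_append, hA1] at hh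
                exact hasTru_of_subAt hh trivial
              have hA1F : A1.hasFls := (hasFls_Fg.mp (hVeq ▸ hVF)).1
              obtain ⟨l1, a1, r1, hA1node⟩ := node_of_TF hA1T hA1F
              have hBV : nodes s2.tr < nodes V := by
                rw [hVeq, hA1node]; exact nodes_lt_Fg (hA1node ▸ hA1F)
              have hOcc : ∀ u, subAt (ETree.node U1 c U2) u = some .tru →
                  subAt s1.tr u = some A1 := by
                intro u hu
                have hXu : subAt (Tg (ETree.node U1 c U2) V) u = some V := Tg_subAt_tru hu V
                rw [← hX'] at hXu
                rcases Fg_factor hXu with ⟨A', hA', hVA'⟩ | ⟨τ, κ, hsp, hτ, hκ⟩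
                · have hAA : A' = A1 := Fg_inj (star_hasFls s2) (by rw [← hVA', hVeq])
                  rw [← hAA]; exact hA'
                · exfalso; have := nodes_subAt hκ; omega
              have hCovHelp : ∀ (w : List Bool) (L : ETree A),
                  subAt (Tg (ETree.node U1 c U2) V) w = some L → (L = .tru ∨ L = .fls) →
                  ∃ u, u <+: w ∧ subAt (ETree.node U1 c U2) u = some .tru := by
                intro w L hw hL
                rcases hL with rfl | rfl
                · obtain ⟨u, v, rfl, hu, hv⟩ := Tg_factor_tru hw
                  exact ⟨u, ⟨v, rfl⟩, hu⟩
                · rcases Tg_factor_fls hw with hexp | ⟨u, v, rfl, hu, hv⟩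
                  · exact absurd (hasFls_of_subAt hexp trivial) hU
                  · exact ⟨u, ⟨v, rfl⟩, hu⟩
              have hCov : ∀ p W, subAt s1.tr p = some W → (W = .tru ∨ W = .fls) →
                  ∃ u, u <+: p ∧ subAt s1.tr u = some A1 := by
                intro p W hp hW
                have hXp : subAt (Fg s1.tr s2.tr) p = some (Fg W s2.tr) := Fg_subAt hp _
                obtain ⟨β, L, hβ, hLleaf⟩ : ∃ (β : List Bool) (L : ETree A),
                    subAt (Fg W s2.tr) β = some L ∧ (L = ETree.tru ∨ L = ETree.fls) := by
                  rcases hW with rfl | rfl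
                  · exact ⟨[], .tru, by rw [Fg_tru]; exact subAt_nil _, Or.inl rfl⟩
                  · rcases tru_or_fls s2.tr with hB | hB
                    · obtain ⟨β, hβ⟩ := exists_tru hB
                      exact ⟨β, .tru, by rw [Fg_fls]; exact hβ, Or.inl rfl⟩
                    · obtain ⟨β, hβ⟩ := exists_fls hB
                      exact ⟨β, .fls, by rw [Fg_fls]; exact hβ, Or.inr rfl⟩
                have hXpβ : subAt (Fg s1.tr s2.tr) (p ++ β) = some L := subAt_trans hXp hβ
                rw [hX'] at hXpβ
                obtain ⟨u, hupre, hu⟩ := hCovHelp _ _ hXpβ hLleaf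
                rcases List.prefix_or_prefix_of_prefix hupre (List.prefix_append p β)
                  with hup | hpu
                · exact ⟨u, hup, hOcc u hu⟩
                · exfalso
                  obtain ⟨κ, rfl⟩ := hpu
                  have h1 : subAt (Tg (ETree.node U1 c U2) V) (p ++ κ) = some V :=
                    Tg_subAt_tru hu V
                  rw [← hX'] at h1
                  have h2 : some V = subAt (Fg W s2.tr) κ := by
                    rw [← h1, subAt_append, hXp]; rfl
                  rcases hW with rfl | rfl
                  · rw [Fg_tru] at h2
                    cases κ with
                    | nil =>
                        rw [subAt_nil] at h2
                        have hVtru : V = .tru := Option.some.inj h2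
                        rw [hVtru] at hVF
                        exact hVF
                    | cons b κ => rw [subAt_cons_tru] at h2; exact nomatch h2
                  · rw [Fg_fls] at h2
                    have := nodes_subAt h2.symm; omega
              obtain ⟨U', hU'T, hAeq⟩ := cover_decomp_F s1.tr hCov
              have hsz : s1.neg.size ≤ n := by
                rw [size_negS]
                have h1 : s1.size + s2.size + 1 ≤ n + 1 := hs
                have := size_pos s2
                omega
              have hsw : sw U' = .tru := by
                refine ih s1.neg hsz (sw U') (sw A1) ?_ ?_
                · rw [tr_negS, hAeq, sw_Fg]
                · simpa using hU'T
              have hU'fls : U' = .fls := by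
                have := congrArg sw hsw
                rw [sw_sw] at this
                exact this
              rw [hU'fls, Fg_fls] at hAeq
              cases u0 with
              | nil =>
                  rw [subAt_nil] at hu0
                  exact nomatch hu0
              | cons b u0 =>
                  have := nodes_subAt_lt hA1
                  rw [hAeq] at this
                  omega

theorem gstar (s : NS A) {U V : ETree A} (hX : s.tr = Tg U V) (hU : ¬ U.hasFls) :
    U = .tru :=
  gstar_aux s.size s le_rfl U V hX hU

theorem gstarF (s : NS A) {U V : ETree A} (hX : s.tr = Fg U V) (hU : ¬ U.hasTru) :
    U = .fls := by
  have h : s.neg.tr = Tg (sw U) (sw V) := by rw [tr_negS, hX, sw_Fg]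
  have := gstar s.neg h (by simpa using hU)
  have h2 := congrArg sw this
  rw [sw_sw] at h2
  exact h2

end SCLComplete
namespace SCLComplete
variable {A : Type}
open ETree

/-- Lemma (Dd): a d-term tree has no nontrivial "conjunction-style" decomposition. -/
theorem dstar (s : NS A) (hd : s.isD) {Y Z : ETree A} (hX : s.tr = Tg Y Z)
    (hYT : Y.hasTru) (hZT : Z.hasTru) (hZF : Z.hasFls) : Y = .tru := by
  cases s with
  | and s1 s2 => exact absurd hd (by simp [NS.isD])
  | lit b a p q =>
      cases Y with
      | tru => rfl
      | fls => exact absurd hYT (by simp [ETree.hasTru])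
      | node Y1 c Y2 =>
          exfalso
          cases b
          · have hX' : ETree.node p.tt a q.ff = Tg (ETree.node Y1 c Y2) Z := hX
            rw [Tg_node] at hX'
            injection hX' with h1 h2 h3
            rcases hYT with h | h
            · exact NT.tt_noFls p (by rw [h1]; exact hasFls_Tg.mpr (Or.inr ⟨h, hZF⟩))
            · exact NF.ff_noTru q (by rw [h3]; exact hasTru_Tg.mpr ⟨h, hZT⟩)
          · have hX' : ETree.node q.ff a p.tt = Tg (ETree.node Y1 c Y2) Z := hX
            rw [Tg_node] at hX'
            injection hX' with h1 h2 h3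
            rcases hYT with h | h
            · exact NF.ff_noTru q (by rw [h1]; exact hasTru_Tg.mpr ⟨h, hZT⟩)
            · exact NT.tt_noFls p (by rw [h3]; exact hasFls_Tg.mpr (Or.inr ⟨h, hZF⟩))
  | or s1 s2 =>
      have hX' : Fg s1.tr s2.tr = Tg Y Z := hX
      -- exposed T-leaf of s1
      obtain ⟨p0, hp0⟩ := exists_tru (star_hasTru s1)
      have hXp0 : subAt (Fg s1.tr s2.tr) p0 = some .tru := Fg_subAt_tru hp0 s2.tr
      rw [hX'] at hXp0
      obtain ⟨u0, w0, hsplit, hu0, hw0⟩ := Tg_factor_tru hXp0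
      cases u0 with
      | nil =>
          rw [subAt_nil] at hu0
          exact Option.some.inj hu0
      | cons b0 u0' =>
          exfalso
          generalize hu0gen : (b0 :: u0' : List Bool) = u0 at hu0 hsplit
          obtain ⟨Z1, hZ1⟩ := subAt_prefix hp0 ⟨w0, hsplit.symm⟩
          have hXZ1 : subAt (Fg s1.tr s2.tr) u0 = some (Fg Z1 s2.tr) := Fg_subAt hZ1 _
          have hXZ : subAt (Tg Y Z) u0 = some Z := Tg_subAt_tru hu0 Z
          rw [hX'] at hXZ1
          have hZeq : Z = Fg Z1 s2.tr := by
            rw [hXZ1] at hXZ; exact (Option.some.inj hXZ).symm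
          have hZ1T : Z1.hasTru := by
            have hh : subAt s1.tr (u0 ++ w0) = some .tru := by rw [← hsplit]; exact hp0
            rw [subAt_append, hZ1] at hh
            exact hasTru_of_subAt hh trivial
          have hZ1F : Z1.hasFls := (hasFls_Fg.mp (hZeq ▸ hZF)).1
          obtain ⟨l1, a1, r1, hZ1node⟩ := node_of_TF hZ1T hZ1F
          have hBZ : nodes s2.tr < nodes Z := by
            rw [hZeq, hZ1node]; exact nodes_lt_Fg (hZ1node ▸ hZ1F)
          have hOcc : ∀ u, subAt Y u = some .tru → subAt s1.tr u = some Z1 := by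
            intro u hu
            have hXu : subAt (Tg Y Z) u = some Z := Tg_subAt_tru hu Z
            rw [← hX'] at hXu
            rcases Fg_factor hXu with ⟨A', hA', hZA'⟩ | ⟨τ, κ, hsp, hτ, hκ⟩
            · have hAA : A' = Z1 := Fg_inj (star_hasFls s2) (by rw [← hZA', hZeq])
              rw [← hAA]; exact hA'
            · exfalso; have := nodes_subAt hκ; omega
          have hCov : ∀ p W, subAt s1.tr p = some W → (W = .tru ∨ W = .fls) →
              ∃ u, u <+: p ∧ subAt s1.tr u = some Z1 := by
            intro p W hp hW
            have hXp : subAt (Fg s1.tr s2.tr) p = some (Fg W s2.tr) := Fg_subAt hp _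
            obtain ⟨β, hβ⟩ : ∃ β : List Bool, subAt (Fg W s2.tr) β = some .tru := by
              rcases hW with rfl | rfl
              · exact ⟨[], by rw [Fg_tru]; exact subAt_nil _⟩
              · obtain ⟨β, hβ⟩ := exists_tru (star_hasTru s2)
                exact ⟨β, by rw [Fg_fls]; exact hβ⟩
            have hXpβ : subAt (Fg s1.tr s2.tr) (p ++ β) = some .tru := subAt_trans hXp hβ
            rw [hX'] at hXpβ
            obtain ⟨u, v, hsp2, hu, hv⟩ := Tg_factor_tru hXpβ
            rcases List.prefix_or_prefix_of_prefix (⟨v, hsp2.symm⟩ : u <+: p ++ β)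
              (List.prefix_append p β) with hup | hpu
            · exact ⟨u, hup, hOcc u hu⟩
            · exfalso
              obtain ⟨κ, rfl⟩ := hpu
              have h1 : subAt (Tg Y Z) (p ++ κ) = some Z := Tg_subAt_tru hu Z
              rw [← hX'] at h1
              have h2 : some Z = subAt (Fg W s2.tr) κ := by
                rw [← h1, subAt_append, hXp]; rfl
              rcases hW with rfl | rfl
              · rw [Fg_tru] at h2
                cases κ with
                | nil =>
                    rw [subAt_nil] at h2
                    have : Z = .tru := Option.some.inj h2
                    rw [this] at hZF
                    exact hZF
                | cons b κ => rw [subAt_cons_tru] at h2; exact nomatch h2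
              · rw [Fg_fls] at h2
                have := nodes_subAt h2.symm; omega
          obtain ⟨U', hU'T, hAeq⟩ := cover_decomp_F s1.tr hCov
          have hU'fls : U' = .fls := gstarF s1 hAeq hU'T
          rw [hU'fls, Fg_fls] at hAeq
          subst hu0gen
          have := nodes_subAt_lt hZ1
          rw [hAeq] at this
          omega

/-- Lemma (Dc): dual. -/
theorem cstar (s : NS A) (hc : s.isC) {Y Z : ETree A} (hX : s.tr = Fg Y Z)
    (hYF : Y.hasFls) (hZT : Z.hasTru) (hZF : Z.hasFls) : Y = .fls := by
  have hd : s.neg.isD := NS.isD_neg hc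
  have hX' : s.neg.tr = Tg (sw Y) (sw Z) := by rw [tr_negS, hX, sw_Fg]
  have := dstar s.neg hd hX' (by simpa using hYF) (by simpa using hZF) (by simpa using hZT)
  have h2 := congrArg sw this
  rw [sw_sw] at h2
  exact h2

/-- A tree cannot have both a conjunction- and a disjunction-style decomposition. -/
theorem no_both {X Y Z Y' Z' : ETree A}
    (h1 : X = Tg Y Z) (hYT : Y.hasTru) (hYF : Y.hasFls) (hZT : Z.hasTru) (hZF : Z.hasFls)
    (h2 : X = Fg Y' Z') (hY'T : Y'.hasTru) (hY'F : Y'.hasFls)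
    (hZ'T : Z'.hasTru) (hZ'F : Z'.hasFls) : False := by
  -- claim (i): nodes Z' < nodes Z
  have hi : nodes Z' < nodes Z := by
    obtain ⟨p, hp⟩ := exists_tru hY'T
    have hXp : subAt X p = some .tru := by rw [h2]; exact Fg_subAt_tru hp Z'
    rw [h1] at hXp
    obtain ⟨u, w, hsp, hu, hw⟩ := Tg_factor_tru hXp
    have hXu : subAt X u = some Z := by rw [h1]; exact Tg_subAt_tru hu Z
    obtain ⟨g, hg⟩ := exists_fls hZF
    have hXug : subAt X (u ++ g) = some .fls := subAt_trans hXu hg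
    rw [h2] at hXug
    obtain ⟨v', h', hsp2, hv', hh'⟩ := Fg_factor_fls hXug
    rcases List.prefix_or_prefix_of_prefix (⟨h', hsp2.symm⟩ : v' <+: u ++ g)
      (List.prefix_append u g) with hvu | huv
    · -- v' <+: u <+: p : F-leaf of Y' above a tru position of Y' : impossible
      exfalso
      have hvp : v' <+: p := hvu.trans ⟨w, hsp.symm⟩
      have := leaf_prefix_eq hv' (Or.inr rfl) hvp hp
      rw [this] at hp
      rw [hp] at hv'
      exact nomatch hv'
    · obtain ⟨κ, rfl⟩ := huv
      have hXv' : subAt X (u ++ κ) = some Z' := by rw [h2]; exact Fg_subAt_fls hv' Z'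
      have h3 : some Z' = subAt Z κ := by
        rw [← hXv', subAt_append]
        rw [h1] at hXu ⊢
        rw [hXu]; rfl
      cases κ with
      | nil =>
          exfalso
          rw [subAt_nil] at h3
          -- Z' = Z and v' = u ; but then u <+: p with F-leaf at u in Y'
          have hvp : u ++ ([] : List Bool) <+: p := by
            rw [List.append_nil]; exact ⟨w, hsp.symm⟩
          have := leaf_prefix_eq hv' (Or.inr rfl) hvp hp
          rw [this] at hp
          rw [hp] at hv'
          exact nomatch hv'
      | cons b κ => exact nodes_subAt_lt h3.symm
  -- claim (ii): nodes Z < nodes Z'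
  have hii : nodes Z < nodes Z' := by
    obtain ⟨p, hp⟩ := exists_fls hYF
    have hXp : subAt X p = some .fls := by rw [h1]; exact Tg_subAt_fls hp Z
    rw [h2] at hXp
    obtain ⟨v, h', hsp, hv, hh'⟩ := Fg_factor_fls hXp
    have hXv : subAt X v = some Z' := by rw [h2]; exact Fg_subAt_fls hv Z'
    obtain ⟨g, hg⟩ := exists_tru hZ'T
    have hXvg : subAt X (v ++ g) = some .tru := subAt_trans hXv hg
    rw [h1] at hXvg
    obtain ⟨u', w', hsp2, hu', hw'⟩ := Tg_factor_tru hXvg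
    rcases List.prefix_or_prefix_of_prefix (⟨w', hsp2.symm⟩ : u' <+: v ++ g)
      (List.prefix_append v g) with huv | hvu
    · exfalso
      have hup : u' <+: p := huv.trans ⟨h', hsp.symm⟩
      have := leaf_prefix_eq hu' (Or.inl rfl) hup hp
      rw [this] at hp
      rw [hp] at hu'
      exact nomatch hu'
    · obtain ⟨κ, rfl⟩ := hvu
      have hXu' : subAt X (v ++ κ) = some Z := by rw [h1]; exact Tg_subAt_tru hu' Z
      have h3 : some Z = subAt Z' κ := by
        rw [← hXu', subAt_append]
        rw [h2] at hXv ⊢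
        rw [hXv]; rfl
      cases κ with
      | nil =>
          exfalso
          rw [subAt_nil] at h3
          have hvp : v ++ ([] : List Bool) <+: p := by
            rw [List.append_nil]; exact ⟨h', hsp.symm⟩
          have := leaf_prefix_eq hu' (Or.inl rfl) hvp hp
          rw [this] at hp
          rw [hp] at hu'
          exact nomatch hu'
      | cons b κ => exact nodes_subAt_lt h3.symm
  omega

end SCLComplete
namespace SCLComplete
variable {A : Type}
open ETree

theorem and_children (s t : NS A) : ∃ l a r,
    (NS.and s t).tr = .node l a r ∧ l.hasFls ∧ r.hasFls := by
  obtain ⟨l0, a, r0, h⟩ := star_node s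
  refine ⟨Tg l0 t.tr, a, Tg r0 t.tr, ?_, ?_, ?_⟩
  · show Tg s.tr t.tr = _
    rw [h, Tg_node]
  · rcases tru_or_fls l0 with h1 | h1
    · exact hasFls_Tg.mpr (Or.inr ⟨h1, star_hasFls t⟩)
    · exact hasFls_Tg.mpr (Or.inl h1)
  · rcases tru_or_fls r0 with h1 | h1
    · exact hasFls_Tg.mpr (Or.inr ⟨h1, star_hasFls t⟩)
    · exact hasFls_Tg.mpr (Or.inl h1)

theorem or_children (s t : NS A) : ∃ l a r,
    (NS.or s t).tr = .node l a r ∧ l.hasTru ∧ r.hasTru := by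
  obtain ⟨l0, a, r0, h⟩ := star_node s
  refine ⟨Fg l0 t.tr, a, Fg r0 t.tr, ?_, ?_, ?_⟩
  · show Fg s.tr t.tr = _
    rw [h, Fg_node]
  · rcases tru_or_fls l0 with h1 | h1
    · exact hasTru_Fg.mpr (Or.inl h1)
    · exact hasTru_Fg.mpr (Or.inr ⟨h1, star_hasTru t⟩)
  · rcases tru_or_fls r0 with h1 | h1
    · exact hasTru_Fg.mpr (Or.inl h1)
    · exact hasTru_Fg.mpr (Or.inr ⟨h1, star_hasTru t⟩)

/-- lit trees are not and-trees / or-trees. -/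
theorem lit_ne_and (b : Bool) (a : A) (p : NT A) (q : NF A) (s t : NS A)
    (h : (NS.lit b a p q).tr = (NS.and s t).tr) : False := by
  obtain ⟨l, c, r, he, hlF, hrF⟩ := and_children s t
  rw [he] at h
  cases b
  · have h' : ETree.node p.tt a q.ff = ETree.node l c r := h
    injection h' with h1 h2 h3
    exact NT.tt_noFls p (h1 ▸ hlF)
  · have h' : ETree.node q.ff a p.tt = ETree.node l c r := h
    injection h' with h1 h2 h3
    exact NT.tt_noFls p (h3 ▸ hrF)

theorem lit_ne_or (b : Bool) (a : A) (p : NT A) (q : NF A) (s t : NS A)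
    (h : (NS.lit b a p q).tr = (NS.or s t).tr) : False := by
  obtain ⟨l, c, r, he, hlT, hrT⟩ := or_children s t
  rw [he] at h
  cases b
  · have h' : ETree.node p.tt a q.ff = ETree.node l c r := h
    injection h' with h1 h2 h3
    exact NF.ff_noTru q (h3 ▸ hrT)
  · have h' : ETree.node q.ff a p.tt = ETree.node l c r := h
    injection h' with h1 h2 h3
    exact NF.ff_noTru q (h1 ▸ hlT)

theorem and_ne_or (s t s' t' : NS A) (h : (NS.and s t).tr = (NS.or s' t').tr) : False := by
  refine no_both (X := (NS.and s t).tr) rfl (star_hasTru s) (star_hasFls s)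
    (star_hasTru t) (star_hasFls t) h (star_hasTru s') (star_hasFls s')
    (star_hasTru t') (star_hasFls t')

/-- injectivity of `tr` on well-formed star terms. -/
theorem star_inj_aux : ∀ n : ℕ, ∀ s s' : NS A, s.size + s'.size ≤ n →
    s.wf → s'.wf → s.tr = s'.tr → s = s' := by
  intro n
  induction n with
  | zero =>
      intro s s' h _ _ _
      have := size_pos s
      have := size_pos s'
      omega
  | succ n ih =>
      intro s s' hsz hw hw' htr
      cases s with
      | lit b a p q =>
          cases s' with
          | and s2 t2 => exact absurd htr (fun h => lit_ne_and _ _ _ _ _ _ h)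
          | or s2 t2 => exact absurd htr (fun h => lit_ne_or _ _ _ _ _ _ h)
          | lit b' a' p' q' =>
              cases b <;> cases b'
              · have h' : ETree.node p.tt a q.ff = ETree.node p'.tt a' q'.ff := htr
                injection h' with h1 h2 h3
                rw [h2, NT.tt_inj h1, NF.ff_inj h3]
              · have h' : ETree.node p.tt a q.ff = ETree.node q'.ff a' p'.tt := htr
                injection h' with h1 h2 h3
                exact absurd (h1 ▸ NT.tt_hasTru p) (NF.ff_noTru q')
              · have h' : ETree.node q.ff a p.tt = ETree.node p'.tt a' q'.ff := htr
                injection h' with h1 h2 h3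
                exact absurd (h1.symm ▸ NT.tt_hasTru p') (NF.ff_noTru q)
              · have h' : ETree.node q.ff a p.tt = ETree.node q'.ff a' p'.tt := htr
                injection h' with h1 h2 h3
                rw [h2, NT.tt_inj h3, NF.ff_inj h1]
      | and s1 t1 =>
          cases s' with
          | lit b' a' p' q' => exact absurd htr.symm (fun h => lit_ne_and _ _ _ _ _ _ h)
          | or s2 t2 => exact absurd htr (fun h => and_ne_or _ _ _ _ h)
          | and s2 t2 =>
              obtain ⟨hw1a, hw1b, hd1⟩ := hw
              obtain ⟨hw2a, hw2b, hd2⟩ := hw'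
              have hX1 : (NS.and s1 t1).tr = Tg s1.tr t1.tr := rfl
              have hX2 : (NS.and s1 t1).tr = Tg s2.tr t2.tr := htr
              obtain ⟨v', hv'⟩ := exists_tru (star_hasTru s2)
              have hXv' : subAt (NS.and s1 t1).tr v' = some t2.tr := by
                rw [hX2]; exact Tg_subAt_tru hv' _
              obtain ⟨τ, hτ⟩ := exists_tru (star_hasTru t2)
              have hXτ : subAt (NS.and s1 t1).tr (v' ++ τ) = some .tru :=
                subAt_trans hXv' hτ
              rw [hX1] at hXτ
              obtain ⟨u, w, hsp, hu, hw2⟩ := Tg_factor_tru hXτ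
              have hXu : subAt (NS.and s1 t1).tr u = some t1.tr := by
                rw [hX1]; exact Tg_subAt_tru hu _
              have hBB : t1.tr = t2.tr := by
                rcases List.prefix_or_prefix_of_prefix
                    (⟨w, hsp.symm⟩ : u <+: v' ++ τ) (List.prefix_append v' τ) with hup | hpu
                · obtain ⟨κ, rfl⟩ := hup
                  cases κ with
                  | nil =>
                      have h5 := hXv'
                      rw [List.append_nil] at h5
                      rw [hXu] at h5
                      exact Option.some.inj h5
                  | cons b κ =>
                      exfalso
                      obtain ⟨R, hR⟩ := subAt_prefix hv' ⟨b :: κ, rfl⟩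
                      have h1 : subAt (NS.and s1 t1).tr u = some (Tg R t2.tr) := by
                        rw [hX2]; exact Tg_subAt hR _
                      rw [hXu] at h1
                      have hBeq : t1.tr = Tg R t2.tr := Option.some.inj h1
                      have h6 : subAt R (b :: κ) = some .tru := by
                        rw [← hv', subAt_append, hR]; rfl
                      have hRT : R.hasTru := hasTru_of_subAt h6 trivial
                      have hRtru := dstar t1 hd1 hBeq hRT (star_hasTru t2) (star_hasFls t2)
                      rw [hRtru, subAt_cons_tru] at h6
                      exact nomatch h6
                · obtain ⟨κ, rfl⟩ := hpu
                  cases κ with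
                  | nil =>
                      have h5 := hXu
                      rw [List.append_nil] at h5
                      rw [hXv'] at h5
                      exact (Option.some.inj h5).symm
                  | cons b κ =>
                      exfalso
                      obtain ⟨R, hR⟩ := subAt_prefix hu ⟨b :: κ, rfl⟩
                      have h1 : subAt (NS.and s1 t1).tr v' = some (Tg R t1.tr) := by
                        rw [hX1]; exact Tg_subAt hR _
                      rw [hXv'] at h1
                      have hBeq : t2.tr = Tg R t1.tr := Option.some.inj h1
                      have h6 : subAt R (b :: κ) = some .tru := by
                        rw [← hu, subAt_append, hR]; rfl
                      have hRT : R.hasTru := hasTru_of_subAt h6 trivial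
                      have hRtru := dstar t2 hd2 hBeq hRT (star_hasTru t1) (star_hasFls t1)
                      rw [hRtru, subAt_cons_tru] at h6
                      exact nomatch h6
              have hsz' : s1.size + t1.size + 1 + (s2.size + t2.size + 1) ≤ n + 1 := hsz
              have ht12 : t1 = t2 := ih t1 t2 (by omega) hw1b hw2b hBB
              have hAA : s1.tr = s2.tr := by
                refine Tg_inj (star_hasTru t1) ?_
                have h7 : Tg s1.tr t1.tr = Tg s2.tr t2.tr := hX1.symm.trans hX2
                rw [← hBB] at h7
                exact h7
              have hs12 : s1 = s2 := ih s1 s2 (by omega) hw1a hw2a hAA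
              rw [hs12, ht12]
      | or s1 t1 =>
          cases s' with
          | lit b' a' p' q' => exact absurd htr.symm (fun h => lit_ne_or _ _ _ _ _ _ h)
          | and s2 t2 => exact absurd htr.symm (fun h => and_ne_or _ _ _ _ h)
          | or s2 t2 =>
              obtain ⟨hw1a, hw1b, hc1⟩ := hw
              obtain ⟨hw2a, hw2b, hc2⟩ := hw'
              have hX1 : (NS.or s1 t1).tr = Fg s1.tr t1.tr := rfl
              have hX2 : (NS.or s1 t1).tr = Fg s2.tr t2.tr := htr
              obtain ⟨v', hv'⟩ := exists_fls (star_hasFls s2)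
              have hXv' : subAt (NS.or s1 t1).tr v' = some t2.tr := by
                rw [hX2]; exact Fg_subAt_fls hv' _
              obtain ⟨τ, hτ⟩ := exists_fls (star_hasFls t2)
              have hXτ : subAt (NS.or s1 t1).tr (v' ++ τ) = some .fls :=
                subAt_trans hXv' hτ
              rw [hX1] at hXτ
              obtain ⟨u, w, hsp, hu, hw2⟩ := Fg_factor_fls hXτ
              have hXu : subAt (NS.or s1 t1).tr u = some t1.tr := by
                rw [hX1]; exact Fg_subAt_fls hu _
              have hBB : t1.tr = t2.tr := by
                rcases List.prefix_or_prefix_of_prefix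
                    (⟨w, hsp.symm⟩ : u <+: v' ++ τ) (List.prefix_append v' τ) with hup | hpu
                · obtain ⟨κ, rfl⟩ := hup
                  cases κ with
                  | nil =>
                      have h5 := hXv'
                      rw [List.append_nil] at h5
                      rw [hXu] at h5
                      exact Option.some.inj h5
                  | cons b κ =>
                      exfalso
                      obtain ⟨R, hR⟩ := subAt_prefix hv' ⟨b :: κ, rfl⟩
                      have h1 : subAt (NS.or s1 t1).tr u = some (Fg R t2.tr) := by
                        rw [hX2]; exact Fg_subAt hR _
                      rw [hXu] at h1
                      have hBeq : t1.tr = Fg R t2.tr := Option.some.inj h1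
                      have h6 : subAt R (b :: κ) = some .fls := by
                        rw [← hv', subAt_append, hR]; rfl
                      have hRF : R.hasFls := hasFls_of_subAt h6 trivial
                      have hRfls := cstar t1 hc1 hBeq hRF (star_hasTru t2) (star_hasFls t2)
                      rw [hRfls, subAt_cons_fls] at h6
                      exact nomatch h6
                · obtain ⟨κ, rfl⟩ := hpu
                  cases κ with
                  | nil =>
                      have h5 := hXu
                      rw [List.append_nil] at h5
                      rw [hXv'] at h5
                      exact (Option.some.inj h5).symm
                  | cons b κ =>
                      exfalso
                      obtain ⟨R, hR⟩ := subAt_prefix hu ⟨b :: κ, rfl⟩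
                      have h1 : subAt (NS.or s1 t1).tr v' = some (Fg R t1.tr) := by
                        rw [hX1]; exact Fg_subAt hR _
                      rw [hXv'] at h1
                      have hBeq : t2.tr = Fg R t1.tr := Option.some.inj h1
                      have h6 : subAt R (b :: κ) = some .fls := by
                        rw [← hu, subAt_append, hR]; rfl
                      have hRF : R.hasFls := hasFls_of_subAt h6 trivial
                      have hRfls := cstar t2 hc2 hBeq hRF (star_hasTru t1) (star_hasFls t1)
                      rw [hRfls, subAt_cons_fls] at h6
                      exact nomatch h6
              have hsz' : s1.size + t1.size + 1 + (s2.size + t2.size + 1) ≤ n + 1 := hsz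
              have ht12 : t1 = t2 := ih t1 t2 (by omega) hw1b hw2b hBB
              have hAA : s1.tr = s2.tr := by
                refine Fg_inj (star_hasFls t1) ?_
                have h7 : Fg s1.tr t1.tr = Fg s2.tr t2.tr := hX1.symm.trans hX2
                rw [← hBB] at h7
                exact h7
              have hs12 : s1 = s2 := ih s1 s2 (by omega) hw1a hw2a hAA
              rw [hs12, ht12]

theorem star_inj {s s' : NS A} (hw : s.wf) (hw' : s'.wf) (h : s.tr = s'.tr) : s = s' :=
  star_inj_aux (s.size + s'.size) s s' le_rfl hw hw' h

/-- injectivity of the top-level `T ⋀ *` splitting. -/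
theorem ts_graft_inj : ∀ p : NT A, ∀ p' : NT A, ∀ s s' : NS A,
    Tg p.tt s.tr = Tg p'.tt s'.tr → p.tt = p'.tt ∧ s.tr = s'.tr := by
  intro p
  induction p with
  | tru =>
      intro p' s s' h
      cases p' with
      | tru => exact ⟨rfl, h⟩
      | node a' u' v' =>
          exfalso
          have h2 : s.tr = Tg (NT.node a' u' v').tt s'.tr := h
          have := gstar s h2 (NT.tt_noFls (NT.node a' u' v'))
          exact nomatch this
  | node a u v ihu ihv =>
      intro p' s s' h
      cases p' with
      | tru =>
          exfalso
          have h2 : Tg (NT.node a u v).tt s.tr = s'.tr := h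
          have := gstar s' h2.symm (NT.tt_noFls (NT.node a u v))
          exact nomatch this
      | node a' u' v' =>
          have h' : ETree.node (Tg u.tt s.tr) a (Tg v.tt s.tr) =
              ETree.node (Tg u'.tt s'.tr) a' (Tg v'.tt s'.tr) := h
          injection h' with h1 h2 h3
          obtain ⟨h4, h5⟩ := ihu u' s s' h1
          obtain ⟨h6, h7⟩ := ihv v' s s' h3
          constructor
          · show ETree.node u.tt a v.tt = ETree.node u'.tt a' v'.tt
            rw [h2, h4, h6]
          · exact h5

/-- injectivity of `tr` on well-formed normal forms. -/
theorem nn_inj {m n : NN A} (hm : m.wf) (hn : n.wf) (h : m.tr = n.tr) : m = n := by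
  cases m with
  | t p =>
      cases n with
      | t p' => rw [NT.tt_inj (show p.tt = p'.tt from h)]
      | f q' =>
          have h' : p.tt = q'.ff := h
          exact absurd (h' ▸ NT.tt_hasTru p) (NF.ff_noTru q')
      | ts p' s' =>
          exfalso
          apply NT.tt_noFls p
          rw [show (NN.t p).tr = p.tt from rfl] at h
          rw [h]
          exact hasFls_Tg.mpr (Or.inr ⟨NT.tt_hasTru p', star_hasFls s'⟩)
  | f q =>
      cases n with
      | t p' =>
          have h' : q.ff = p'.tt := h
          exact absurd (h'.symm ▸ NT.tt_hasTru p') (NF.ff_noTru q)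
      | f q' => rw [NF.ff_inj (show q.ff = q'.ff from h)]
      | ts p' s' =>
          exfalso
          apply NF.ff_noTru q
          rw [show (NN.f q).tr = q.ff from rfl] at h
          rw [h]
          exact hasTru_Tg.mpr ⟨NT.tt_hasTru p', star_hasTru s'⟩
  | ts p s =>
      cases n with
      | t p' =>
          exfalso
          apply NT.tt_noFls p'
          rw [show (NN.t p').tr = p'.tt from rfl] at h
          rw [← h]
          exact hasFls_Tg.mpr (Or.inr ⟨NT.tt_hasTru p, star_hasFls s⟩)
      | f q' =>
          exfalso
          apply NF.ff_noTru q'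
          rw [show (NN.f q').tr = q'.ff from rfl] at h
          rw [← h]
          exact hasTru_Tg.mpr ⟨NT.tt_hasTru p, star_hasTru s⟩
      | ts p' s' =>
          obtain ⟨h1, h2⟩ := ts_graft_inj p p' s s' h
          rw [NT.tt_inj h1, star_inj hm hn h2]

end SCLComplete
namespace SCLComplete
variable {A : Type}
open ETree

theorem Tg_assoc (X Y Z : ETree A) : Tg (Tg X Y) Z = Tg X (Tg Y Z) := by
  show (X.subst Y .fls).subst Z .fls = X.subst (Y.subst Z .fls) .fls
  rw [subst_comp]
  rfl

/-- soundness of EqFSCL for se. -/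
theorem se_sound {p q : STerm A} (h : EqFSCL p q) : se p = se q := by
  induction h with
  | refl p => rfl
  | symm _ ih => exact ih.symm
  | trans _ _ ih1 ih2 => exact ih1.trans ih2
  | neg_congr _ ih => show sw _ = sw _; rw [ih]
  | and_congr _ _ ih1 ih2 => show Tg _ _ = Tg _ _; rw [ih1, ih2]
  | or_congr _ _ ih1 ih2 => show Fg _ _ = Fg _ _; rw [ih1, ih2]
  | scl1 => rfl
  | scl2 x y =>
      show Fg (se x) (se y) = sw (Tg (sw (se x)) (sw (se y)))
      rw [sw_Tg, sw_sw, sw_sw]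
  | scl3 x => exact sw_sw (se x)
  | scl4 x y z => exact Tg_assoc (se x) (se y) (se z)
  | scl5 x => rfl
  | scl6 x => exact subst_id (se x)
  | scl7 x => rfl
  | scl8 x =>
      show (se x).subst .fls .fls = ((se x).subst .fls .tru).subst .fls .fls
      rw [subst_comp]
      rfl
  | scl9 x y =>
      show ((se x).subst .fls .fls).subst .tru (se y)
          = ((se x).subst .tru .tru).subst (se y) .fls
      rw [subst_comp, subst_comp]
      rfl
  | scl10 x y z =>
      show ((se x).subst (se y) .fls).subst .tru ((se z).subst .fls .fls) =
        ((se x).subst .tru ((se z).subst .fls .fls)).subst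
          ((se y).subst .tru ((se z).subst .fls .fls)) .fls
      rw [subst_comp, subst_comp, subst_comp]
      rfl

end SCLComplete
/-- completeness of EqFSCL for FSCL_se. -/
theorem eqfscl_complete (A : Type) [Countable A] (P Q : STerm A)
    (h : se P = se Q) : EqFSCL P Q := by
  have h1 := SCLComplete.Eq0.nf_correct P
  have h2 := SCLComplete.Eq0.nf_correct Q
  have e1 : (SCLComplete.nf P).tr = (SCLComplete.nf Q).tr := by
    rw [← SCLComplete.se_embN, ← SCLComplete.se_embN,
      ← SCLComplete.se_sound h1, ← SCLComplete.se_sound h2]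
    exact h
  have e2 : SCLComplete.nf P = SCLComplete.nf Q :=
    SCLComplete.nn_inj (SCLComplete.wf_nf P) (SCLComplete.wf_nf Q) e1
  rw [e2] at h1
  exact h1.trans h2.symm
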